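/- arXiv:2509.01887 — 4 statements merged into one kernel-verified Lean document; each statement's English description precedes it below -/
import Mathlib

section
/- Let G = (V, D, B) be a DMG containing a vertex S with Pa_G(S) = Anc_G(S) ∖ {S} and {S, P} ∈ B for every P ∈ Pa_G(S), and containing a vertex F such that (F, X) ∈ D and {F, X} ∈ B for every X ∈ V ∖ {F}. Let r ∈ {d, σ} and let 𝓘 be a collection of subsets of V such that no I ∈ 𝓘 satisfies S ∉ I and Pa_G(S) ⊆ I. Then the DMG G' = (V, D ∖ {(F,S)}, B) is 𝓘-r-Markov equivalent to G. -/
universe u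

/-- A directed mixed graph (DMG): directed edges `D` (no self-loops) and
bidirected edges `B` (symmetric, no self-loops). -/
structure DMG (V : Type u) where
  D : V → V → Prop
  B : V → V → Prop
  D_irrefl : ∀ x, ¬ D x x
  B_symm : ∀ x y, B x y → B y x
  B_irrefl : ∀ x, ¬ B x x

namespace DMG

variable {V : Type u}

/-- `x` is an ancestor of `y` (reflexive-transitive closure of `D`). -/
def anc (G : DMG V) (x y : V) : Prop := Relation.ReflTransGen G.D x y

/-- ancestors of a set of vertices -/
def ancSet (G : DMG V) (W : Set V) : Set V := {x | ∃ y ∈ W, G.anc x y}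

/-- the strongly connected component of `x` -/
def scc (G : DMG V) (x : V) : Set V := {y | G.anc x y ∧ G.anc y x}

/-- parents of a vertex -/
def pa (G : DMG V) (x : V) : Set V := {y | G.D y x}

/-- parents of a set of vertices -/
def paSet (G : DMG V) (W : Set V) : Set V := {y | ∃ x ∈ W, G.D y x}

/-- non-adjacent bidirected edges -/
def BN (G : DMG V) : V → V → Prop := fun x y => G.B x y ∧ ¬ G.D x y ∧ ¬ G.D y x

/-- the intervened graph `G_Ī` -/
def intervene (G : DMG V) (I : Set V) : DMG V where
  D a b := G.D a b ∧ b ∉ I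
  B a b := G.B a b ∧ a ∉ I ∧ b ∉ I
  D_irrefl := fun x h => G.D_irrefl x h.1
  B_symm := fun x y h => ⟨G.B_symm x y h.1, h.2.2, h.2.1⟩
  B_irrefl := fun x h => G.B_irrefl x h.1

/-- the directed skeleton `G^u` -/
def skel (G : DMG V) : SimpleGraph V where
  Adj x y := x ≠ y ∧ (G.D x y ∨ G.D y x)
  symm := ⟨fun _ _ h => ⟨h.1.symm, h.2.elim Or.inr Or.inl⟩⟩
  loopless := ⟨fun _ h => h.1 rfl⟩

/-- the undirected component graph `G^{uc}` -/
def ucomp (G : DMG V) : SimpleGraph V where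
  Adj x y := x ≠ y ∧ ¬ G.D x y ∧ ¬ G.D y x
  symm := ⟨fun _ _ h => ⟨h.1.symm, h.2.2, h.2.1⟩⟩
  loopless := ⟨fun _ h => h.1 rfl⟩

/-- `S` is an SCC of `G` -/
def isSCC (G : DMG V) (S : Set V) : Prop := ∃ x, S = G.scc x

/-- `S` is an SCC-ancestor of the distinct SCC `S'` -/
def sccAncestor (G : DMG V) (S S' : Set V) : Prop :=
  S ≠ S' ∧ ∃ x ∈ S, ∃ y ∈ S', G.anc x y

/-- `S` is a `k`-order SCC-ancestor of `S'`: there is a directed path from a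
vertex of `S` to a vertex of `S'` passing through at most `k-1` SCCs other than
`S` and `S'`. -/
def kOrderSCCAnc (G : DMG V) (k : ℕ) (S S' : Set V) : Prop :=
  S ≠ S' ∧ ∃ p : List V, p ≠ [] ∧ p.Chain' G.D ∧
    (∃ x ∈ S, p.head? = some x) ∧ (∃ y ∈ S', p.getLast? = some y) ∧
    ({C : Set V | ∃ z ∈ p, z ∉ S ∧ z ∉ S' ∧ C = G.scc z}).ncard ≤ k - 1

/-- `G` has SCC-Anc length `l` : `l` is the least integer such that every
SCC-ancestor of any SCC is an `l`-order SCC-ancestor. -/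
def sccAncLength (G : DMG V) (l : ℕ) : Prop :=
  IsLeast {m | ∀ S S' : Set V, G.isSCC S → G.isSCC S' →
    G.sccAncestor S' S → G.kOrderSCCAnc m S' S} l

/-- membership in the first layer `𝒯_1` of the SCC-Anc partition -/
def sccLayer0 (G : DMG V) (S : Set V) : Prop :=
  G.isSCC S ∧ ¬ ∃ S' : Set V, G.isSCC S' ∧ G.sccAncestor S' S

/-- `m` is the least order at which `S'` is an SCC-ancestor of `S` -/
def minOrd (G : DMG V) (S' S : Set V) (m : ℕ) : Prop :=
  IsLeast {j | G.kOrderSCCAnc j S' S} m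

/-- membership in the layer `𝒯_{i+1}` of the SCC-Anc partition (0-indexed `i`):
for `i ≥ 1`, `S ∈ 𝒯_{i+1}` iff some SCC of `𝒯_1` is an `i`-order SCC-ancestor
of `S` and no SCC of `𝒯_1` is only an `r`-order SCC-ancestor of `S` for `r > i`,
i.e. `i` is the largest minimal order of a `𝒯_1` SCC-ancestor of `S`. -/
def sccLayer (G : DMG V) (i : ℕ) (S : Set V) : Prop :=
  if i = 0 then G.sccLayer0 S
  else G.isSCC S ∧ IsGreatest {m | ∃ S' : Set V, G.sccLayer0 S' ∧ G.minOrd S' S m} i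

/-- `T_{k+1}` (0-indexed `k`): the set of vertices in layers `𝒯_1, …, 𝒯_k` -/
def TUnion (G : DMG V) (k : ℕ) : Set V :=
  {v | ∃ i < k, ∃ S : Set V, G.sccLayer i S ∧ v ∈ S}

/-- SCC-Anc separating system on `(V, 𝕋^G)` (layers 0-indexed by `0,…,l`) -/
def SCCAncSepSystem (G : DMG V) (l : ℕ) (𝓘 : Set (Set V)) : Prop :=
  ∀ k ≤ l, ∀ S : Set V, G.sccLayer k S → ∀ X ∈ S,
    ∃ I ∈ 𝓘, (G.TUnion k ∪ S) \ {X} ⊆ I ∧ X ∉ I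

/-- `G` with the directed edge `(F, S)` removed -/
def removeDir (G : DMG V) (F S : V) : DMG V where
  D a b := G.D a b ∧ ¬(a = F ∧ b = S)
  B := G.B
  D_irrefl := fun x h => G.D_irrefl x h.1
  B_symm := G.B_symm
  B_irrefl := fun x h => G.B_irrefl x h

/-- `G` with the bidirected edge `{S, R}` removed -/
def removeBi (G : DMG V) (S R : V) : DMG V where
  D := G.D
  B a b := G.B a b ∧ ¬((a = S ∧ b = R) ∨ (a = R ∧ b = S))
  D_irrefl := G.D_irrefl
  B_symm := by
    intro x y h
    refine ⟨G.B_symm x y h.1, ?_⟩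
    rintro (⟨h1, h2⟩ | ⟨h1, h2⟩)
    · exact h.2 (Or.inr ⟨h2, h1⟩)
    · exact h.2 (Or.inl ⟨h2, h1⟩)
  B_irrefl := fun x h => G.B_irrefl x h.1

end DMG

/-- kinds of edges along a mixed path: forward directed, backward directed, bidirected -/
inductive EKind | fwd | bwd | bi

/-- a mixed path skeleton: `k ≥ 1` steps, vertices `Z 0, …, Z k`, edges `E 0, …, E (k-1)`
(step `i` joins `Z i` and `Z (i+1)`). -/
structure MPath (V : Type u) where
  k : ℕ
  Z : ℕ → V
  E : ℕ → EKind
  hk : 1 ≤ k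

namespace MPath

variable {V : Type u}

/-- the path is a path of `G` -/
def valid (p : MPath V) (G : DMG V) : Prop :=
  ∀ i < p.k,
    (p.E i = EKind.fwd → G.D (p.Z i) (p.Z (i+1))) ∧
    (p.E i = EKind.bwd → G.D (p.Z (i+1)) (p.Z i)) ∧
    (p.E i = EKind.bi → G.B (p.Z i) (p.Z (i+1)))

/-- the step has an arrowhead at its second endpoint -/
def headAtSnd : EKind → Prop
  | EKind.fwd => True
  | EKind.bi => True
  | EKind.bwd => False

/-- the step has an arrowhead at its first endpoint -/
def headAtFst : EKind → Prop
  | EKind.bwd => True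
  | EKind.bi => True
  | EKind.fwd => False

/-- `Z i` is a collider on the path (meaningful for `1 ≤ i ≤ k-1`) -/
def collider (p : MPath V) (i : ℕ) : Prop :=
  headAtSnd (p.E (i-1)) ∧ headAtFst (p.E i)

end MPath

/-- the separation rule: `d`-separation or `σ`-separation -/
inductive SepRule | d | s

/-- the path between `x` and `y` is `r`-blocked by `S` in `G` -/
def MPath.blocked {V : Type u} (p : MPath V) (G : DMG V) (r : SepRule) (S : Set V)
    (x y : V) : Prop :=
  ∃ i, 1 ≤ i ∧ i < p.k ∧
    ((p.collider i ∧ p.Z i ∉ G.ancSet (S ∪ {x, y})) ∨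
     (¬ p.collider i ∧ p.Z i ∈ S ∧
       (r = SepRule.d ∨
        (p.E i = EKind.fwd ∧ p.Z (i+1) ∉ G.scc (p.Z i)) ∨
        (p.E (i-1) = EKind.bwd ∧ p.Z (i-1) ∉ G.scc (p.Z i)))))

/-- `S` `r`-separates `x` and `y` in `G` -/
def rSep {V : Type u} (G : DMG V) (r : SepRule) (S : Set V) (x y : V) : Prop :=
  ∀ p : MPath V, p.valid G → p.Z 0 = x → p.Z p.k = y → p.blocked G r S x y

/-- the `r`-independence model of `G` -/
def IM {V : Type u} (G : DMG V) (r : SepRule) : Set (V × V × Set V) :=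
  {t | t.1 ≠ t.2.1 ∧ t.1 ∉ t.2.2 ∧ t.2.1 ∉ t.2.2 ∧ rSep G r t.2.2 t.1 t.2.1}

/-- `G` and `H` are `𝓘`-`r`-Markov equivalent -/
def IMEquiv {V : Type u} (G H : DMG V) (r : SepRule) (𝓘 : Set (Set V)) : Prop :=
  ∀ I ∈ 𝓘, IM (G.intervene I) r = IM (H.intervene I) r

/-- a `d`-inducing path between `x` and `y`: every collider is an ancestor of `{x,y}` -/
def MPath.dInducing {V : Type u} (p : MPath V) (G : DMG V) (x y : V) : Prop :=
  ∀ i, 1 ≤ i → i < p.k → p.collider i → p.Z i ∈ G.ancSet {x, y}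

/-- a `σ`-inducing path between `x` and `y` -/
def MPath.sInducing {V : Type u} (p : MPath V) (G : DMG V) (x y : V) : Prop :=
  p.dInducing G x y ∧
  ∀ i, 1 ≤ i → i < p.k → ¬ p.collider i →
    (p.E (i-1) = EKind.bwd → p.Z (i-1) ∈ G.scc (p.Z i)) ∧
    (p.E i = EKind.fwd → p.Z (i+1) ∈ G.scc (p.Z i))

/-- an `r`-inducing path -/
def MPath.rInducing {V : Type u} (p : MPath V) (G : DMG V) (r : SepRule) (x y : V) : Prop :=
  match r with
  | SepRule.d => p.dInducing G x y
  | SepRule.s => p.sInducing G x y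

/-- colored separating system on `(V, C)` -/
def ColoredSepSystem {V : Type u} {γ : Type*} (C : V → γ) (𝓘 : Set (Set V)) : Prop :=
  ∀ X Y : V, C X ≠ C Y → ∃ I ∈ 𝓘, X ∈ I ∧ Y ∉ I

/-- non-adjacent separating system on `(V, D)` -/
def NonAdjSepSystem {V : Type u} (G : DMG V) (𝓘 : Set (Set V)) : Prop :=
  ∀ X Y : V, X ≠ Y → ¬ G.D X Y → ¬ G.D Y X →
    ∃ I ∈ 𝓘, G.paSet {X, Y} ⊆ I ∧ X ∉ I ∧ Y ∉ I

/-- adjacent separating system on `(V, D)` -/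
def AdjSepSystem {V : Type u} (G : DMG V) (𝓘 : Set (Set V)) : Prop :=
  ∀ X Y : V, G.D X Y → ¬ G.D Y X →
    (∃ I ∈ 𝓘, G.paSet {X, Y} \ {X, Y} ⊆ I ∧ X ∉ I ∧ Y ∉ I) ∧
    (∃ I' ∈ 𝓘, G.paSet {X, Y} \ {Y} ⊆ I' ∧ X ∈ I' ∧ Y ∉ I')

/-- the minimum edge clique cover number `cc(H)` -/
noncomputable def ecc {V : Type u} (H : SimpleGraph V) : ℕ :=
  sInf {K | ∃ C : Fin K → Set V, (∀ k, H.IsClique (C k)) ∧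
    ∀ x y : V, H.Adj x y → ∃ k, x ∈ C k ∧ y ∈ C k}

/-- two edges that must receive different colors in a strong edge coloring:
they are distinct and share an endpoint or are both incident to a common third edge -/
def StrongAdjE {V : Type u} (H : SimpleGraph V) (e₁ e₂ : Sym2 V) : Prop :=
  e₁ ≠ e₂ ∧ ((∃ v, v ∈ e₁ ∧ v ∈ e₂) ∨
    ∃ e₃ ∈ H.edgeSet, e₃ ≠ e₁ ∧ e₃ ≠ e₂ ∧ (∃ v, v ∈ e₁ ∧ v ∈ e₃) ∧ ∃ u, u ∈ e₂ ∧ u ∈ e₃)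

/-- the strong edge chromatic number `χ_s(H)` -/
noncomputable def strongChrom {V : Type u} (H : SimpleGraph V) : ℕ :=
  sInf {K | ∃ f : Sym2 V → Fin K, ∀ e₁ ∈ H.edgeSet, ∀ e₂ ∈ H.edgeSet,
    StrongAdjE H e₁ e₂ → f e₁ ≠ f e₂}
namespace MERD

open Classical

variable {V : Type u}

inductive AS : Type where
  | hd | tg | tb
  deriving DecidableEq

/-- the arrival-state order: `tg` is at least as permissive as `tb` -/
def ASge (a' a : AS) : Prop := a' = a ∨ (a' = AS.tg ∧ a = AS.tb)

lemma ASge.refl (a : AS) : ASge a a := Or.inl rfl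

def eRel (K : DMG V) (v : V) (g : EKind) (w : V) : Prop :=
  match g with
  | EKind.fwd => K.D v w
  | EKind.bwd => K.D w v
  | EKind.bi  => K.B v w

noncomputable def arrS (K : DMG V) (v : V) (g : EKind) (w : V) : AS :=
  match g with
  | EKind.fwd => AS.hd
  | EKind.bi  => AS.hd
  | EKind.bwd => if v ∈ K.scc w then AS.tg else AS.tb

def isColl (a : AS) (g : EKind) : Prop := a = AS.hd ∧ (g = EKind.bwd ∨ g = EKind.bi)

def aset (K : DMG V) (Z : Set V) (x y : V) : Set V := K.ancSet (Z ∪ {x, y})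

def pass (K : DMG V) (r : SepRule) (Z : Set V) (x y : V) (a : AS) (v : V) (g : EKind) (w : V) : Prop :=
  (isColl a g → v ∈ aset K Z x y) ∧
  (¬ isColl a g → v ∈ Z → (r = SepRule.s ∧ a ≠ AS.tb ∧ (g = EKind.fwd → w ∈ K.scc v)))

/-- `okE K r Z x y t b a v l` : the walk continuing from `v` (arrived with state `a`)
along steps `l` is everywhere unblocked and ends at `t` with arrival state `b`. -/
def okE (K : DMG V) (r : SepRule) (Z : Set V) (x y t : V) (b : AS) : AS → V → List (EKind × V) → Prop
  | a, v, [] => v = t ∧ a = b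
  | a, v, (g, w) :: l => eRel K v g w ∧ pass K r Z x y a v g w ∧ okE K r Z x y t b (arrS K v g w) w l

/-- reachable states of the unblocked-walk automaton starting at `x` -/
inductive Reach (K : DMG V) (r : SepRule) (Z : Set V) (x y : V) : V → AS → Prop
  | base (g w) : eRel K x g w → Reach K r Z x y w (arrS K x g w)
  | step {v a} (g w) : Reach K r Z x y v a → eRel K v g w → pass K r Z x y a v g w →
      Reach K r Z x y w (arrS K v g w)

/-- `x` and `y` are connectable given `Z` -/
def conn (K : DMG V) (r : SepRule) (Z : Set V) (x y : V) : Prop :=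
  ∃ a, Reach K r Z x y y a

lemma okE_snoc {K : DMG V} {r Z x y t b a v l g w}
    (h : okE K r Z x y t b a v l) (he : eRel K t g w) (hp : pass K r Z x y b t g w) :
    okE K r Z x y w (arrS K t g w) a v (l ++ [(g, w)]) := by
  induction l generalizing a v with
  | nil => obtain ⟨rfl, rfl⟩ := h; exact ⟨he, hp, rfl, rfl⟩
  | cons s l ih =>
    obtain ⟨g', w'⟩ := s
    obtain ⟨h1, h2, h3⟩ := h
    exact ⟨h1, h2, ih h3⟩

lemma reach_iff_okE {K : DMG V} {r Z x y v a} :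
    Reach K r Z x y v a ↔ ∃ g w l, eRel K x g w ∧ okE K r Z x y v a (arrS K x g w) w l := by
  constructor
  · intro h
    induction h with
    | base g w he => exact ⟨g, w, [], he, rfl, rfl⟩
    | step g w _ he hp ih =>
      obtain ⟨g0, w0, l, he0, hok⟩ := ih
      exact ⟨g0, w0, l ++ [(g, w)], he0, okE_snoc hok he hp⟩
  · rintro ⟨g, w, l, he, hok⟩
    have base : Reach K r Z x y w (arrS K x g w) := Reach.base g w he
    clear he
    generalize hA : arrS K x g w = a0 at *
    clear hA
    induction l generalizing w a0 with
    | nil => obtain ⟨rfl, rfl⟩ := hok; exact base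
    | cons s l ih =>
      obtain ⟨g', w'⟩ := s
      obtain ⟨h1, h2, h3⟩ := hok
      exact ih _ _ h3 (Reach.step g' w' base h1 h2)

end MERD
namespace MERD

variable {V : Type u}

lemma headAtFst_iff (g : EKind) : MPath.headAtFst g ↔ (g = EKind.bwd ∨ g = EKind.bi) := by
  cases g <;> simp [MPath.headAtFst]

lemma headAtSnd_iff (g : EKind) : MPath.headAtSnd g ↔ ¬ g = EKind.bwd := by
  cases g <;> simp [MPath.headAtSnd]

lemma arrS_eq_hd_iff {K : DMG V} {u v : V} {g : EKind} : arrS K u g v = AS.hd ↔ g ≠ EKind.bwd := by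
  cases g <;> simp [arrS]
  split <;> simp

lemma isColl_arrS {K : DMG V} {u v : V} {g' g : EKind} :
    isColl (arrS K u g' v) g ↔ (MPath.headAtSnd g' ∧ MPath.headAtFst g) := by
  unfold isColl
  rw [arrS_eq_hd_iff, headAtFst_iff, headAtSnd_iff]

lemma arrS_bwd_tg {K : DMG V} {u v : V} (h : u ∈ K.scc v) : arrS K u EKind.bwd v = AS.tg := by
  simp [arrS, h]

lemma arrS_bwd_tb {K : DMG V} {u v : V} (h : u ∉ K.scc v) : arrS K u EKind.bwd v = AS.tb := by
  simp [arrS, h]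

lemma arrS_ne_tb {K : DMG V} {u v : V} {g : EKind} (h : g ≠ EKind.bwd) :
    arrS K u g v ≠ AS.tb := by
  cases g <;> simp_all [arrS]

section index

variable {K : DMG V} {r : SepRule} {Z : Set V} {x y t : V} {b : AS}

lemma okE_edge : ∀ {l : List (EKind × V)} {a : AS} {v : V}, okE K r Z x y t b a v l →
    ∀ j, j < l.length →
      eRel K ((v :: l.map Prod.snd).getD j x) ((l.map Prod.fst).getD j EKind.fwd)
        ((v :: l.map Prod.snd).getD (j+1) x) := by
  intro l
  induction l with
  | nil => intro a v _ j hj; simp at hj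
  | cons s l ih =>
    obtain ⟨g, w⟩ := s
    intro a v h j hj
    obtain ⟨h1, _, h3⟩ := h
    match j with
    | 0 => simpa using h1
    | Nat.succ j =>
      have := ih h3 j (by simpa using hj)
      simpa using this

lemma okE_pass_succ : ∀ {l : List (EKind × V)} {a : AS} {v : V}, okE K r Z x y t b a v l →
    ∀ j, j + 1 < l.length →
      pass K r Z x y
        (arrS K ((v :: l.map Prod.snd).getD j x) ((l.map Prod.fst).getD j EKind.fwd)
          ((v :: l.map Prod.snd).getD (j+1) x))
        ((v :: l.map Prod.snd).getD (j+1) x) ((l.map Prod.fst).getD (j+1) EKind.fwd)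
        ((v :: l.map Prod.snd).getD (j+2) x) := by
  intro l
  induction l with
  | nil => intro a v _ j hj; simp at hj
  | cons s l ih =>
    obtain ⟨g, w⟩ := s
    intro a v h j hj
    obtain ⟨_, _, h3⟩ := h
    match j with
    | 0 =>
      match l, h3 with
      | (g', w') :: l', h3 =>
        simpa using h3.2.1
    | Nat.succ j =>
      have := ih h3 j (by simpa using hj)
      simpa using this

lemma okE_last : ∀ {l : List (EKind × V)} {a : AS} {v : V}, okE K r Z x y t b a v l →
    (v :: l.map Prod.snd).getD l.length x = t := by
  intro l
  induction l with
  | nil => intro a v h; exact h.1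
  | cons s l ih =>
    obtain ⟨g, w⟩ := s
    intro a v h
    simpa using ih h.2.2

end index

end MERD
namespace MERD

variable {V : Type u}

lemma conn_not_rSep {K : DMG V} {r : SepRule} {Z : Set V} {x y : V}
    (h : conn K r Z x y) : ¬ rSep K r Z x y := by
  obtain ⟨aa, hre⟩ := h
  rw [reach_iff_okE] at hre
  obtain ⟨g, w, l, he, hok⟩ := hre
  intro hsep
  -- assemble the MPath
  set s : List (EKind × V) := (g, w) :: l with hs
  set vf : ℕ → V := fun i => (x :: s.map Prod.snd).getD i x with hvf
  set ef : ℕ → EKind := fun i => (s.map Prod.fst).getD i EKind.fwd with hef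
  set p : MPath V := ⟨s.length, vf, ef, by simp [hs]⟩ with hp
  have hvf0 : vf 0 = x := by simp [hvf]
  have hvf1 : vf 1 = w := by simp [hvf, hs]
  have hef0 : ef 0 = g := by simp [hef, hs]
  have hshift : ∀ j, vf (j+1) = ((w :: l.map Prod.snd).getD j x) := by
    intro j; simp [hvf, hs]
  have hefshift : ∀ j, ef (j+1) = ((l.map Prod.fst).getD j EKind.fwd) := by
    intro j; simp [hef, hs]
  have hedge : ∀ i < s.length, eRel K (vf i) (ef i) (vf (i+1)) := by
    intro i hi
    match i with
    | 0 => rw [hvf0, hvf1, hef0]; exact he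
    | Nat.succ j =>
      have hj : j < l.length := by simpa [hs] using hi
      have := okE_edge hok j hj
      rw [hshift, hefshift, hshift]
      exact this
  have hpass : ∀ i, 1 ≤ i → i < s.length →
      pass K r Z x y (arrS K (vf (i-1)) (ef (i-1)) (vf i)) (vf i) (ef i) (vf (i+1)) := by
    intro i h1 h2
    match i with
    | 1 =>
      have hlen : 0 < l.length := by
        have h2' := h2
        rw [hs] at h2'
        simpa using h2'
      obtain ⟨⟨g', w'⟩, l', rfl⟩ := List.exists_cons_of_ne_nil (List.ne_nil_of_length_pos hlen)
      have hp1 := hok.2.1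
      simp only [show (1:ℕ) - 1 = 0 from rfl, hvf0, hef0, hvf1]
      rw [hshift, hefshift]
      simpa [hs] using hp1
    | Nat.succ (Nat.succ j) =>
      have hj : j + 1 < l.length := by simpa [hs] using h2
      have := okE_pass_succ hok j hj
      have e1 : (Nat.succ (Nat.succ j)) - 1 = j + 1 := rfl
      rw [e1, hshift, hefshift, hshift, hefshift, hshift]
      exact this
  have hvalid : p.valid K := by
    intro i hi
    have hE := hedge i hi
    refine ⟨?_, ?_, ?_⟩ <;> intro hg <;>
      · show _
        rw [show p.E = ef from rfl] at hg
        rw [hg] at hE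
        simpa [eRel] using hE
  have hZ0 : p.Z 0 = x := hvf0
  have hZk : p.Z p.k = y := by
    show vf s.length = y
    have := okE_last hok
    have hl : s.length = l.length + 1 := by simp [hs]
    rw [hl, hshift]
    exact this
  have hblk := hsep p hvalid hZ0 hZk
  obtain ⟨i, h1, h2, hcl⟩ := hblk
  have hps := hpass i h1 h2
  rcases hcl with ⟨hco, hna⟩ | ⟨hnc, hZ, hd⟩
  · exact hna (hps.1 (isColl_arrS.mpr hco))
  · have hnc' : ¬ isColl (arrS K (vf (i-1)) (ef (i-1)) (vf i)) (ef i) :=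
      fun hc => hnc (isColl_arrS.mp hc)
    obtain ⟨hr, hnb, hfw⟩ := hps.2 hnc' hZ
    rcases hd with hd | ⟨hf, hsc⟩ | ⟨hb, hsc⟩
    · rw [hd] at hr; exact SepRule.noConfusion hr
    · exact hsc (hfw hf)
    · rw [show p.E (i-1) = ef (i-1) from rfl] at hb
      rw [hb] at hnb
      exact hnb (arrS_bwd_tb hsc)

lemma not_rSep_conn {K : DMG V} {r : SepRule} {Z : Set V} {x y : V}
    (h : ¬ rSep K r Z x y) : conn K r Z x y := by
  rw [rSep] at h
  push_neg at h
  obtain ⟨p, hv, hx, hyk, hnb⟩ := h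
  have hnb' : ∀ i, 1 ≤ i → i < p.k → ¬ ((p.collider i ∧ p.Z i ∉ K.ancSet (Z ∪ {x, y})) ∨
      (¬ p.collider i ∧ p.Z i ∈ Z ∧
        (r = SepRule.d ∨ (p.E i = EKind.fwd ∧ p.Z (i+1) ∉ K.scc (p.Z i)) ∨
          (p.E (i-1) = EKind.bwd ∧ p.Z (i-1) ∉ K.scc (p.Z i))))) := by
    intro i hi1 hi2 hcl
    exact hnb ⟨i, hi1, hi2, hcl⟩
  have hedge : ∀ i < p.k, eRel K (p.Z i) (p.E i) (p.Z (i+1)) := by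
    intro i hi
    have := hv i hi
    cases hE : p.E i
    · simpa [eRel] using this.1 hE
    · simpa [eRel] using this.2.1 hE
    · simpa [eRel] using this.2.2 hE
  have hpass : ∀ j, 1 ≤ j → j < p.k →
      pass K r Z x y (arrS K (p.Z (j-1)) (p.E (j-1)) (p.Z j)) (p.Z j) (p.E j) (p.Z (j+1)) := by
    intro j h1 h2
    constructor
    · intro hc
      by_contra hna
      exact hnb' j h1 h2 (Or.inl ⟨isColl_arrS.mp hc, hna⟩)
    · intro hnc hZ
      have hblk : ¬ (r = SepRule.d ∨ (p.E j = EKind.fwd ∧ p.Z (j+1) ∉ K.scc (p.Z j)) ∨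
          (p.E (j-1) = EKind.bwd ∧ p.Z (j-1) ∉ K.scc (p.Z j))) := by
        intro hd
        exact hnb' j h1 h2 (Or.inr ⟨fun hcol => hnc (isColl_arrS.mpr hcol), hZ, hd⟩)
      push_neg at hblk
      obtain ⟨hr1, hr2, hr3⟩ := hblk
      refine ⟨?_, ?_, ?_⟩
      · cases r
        · exact absurd rfl hr1
        · rfl
      · cases hE : p.E (j-1)
        · exact arrS_ne_tb (by simp)
        · rw [arrS_bwd_tg (hr3 hE)]
          simp
        · exact arrS_ne_tb (by simp)
      · intro hf
        exact hr2 hf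
  -- downward induction
  set b : AS := arrS K (p.Z (p.k - 1)) (p.E (p.k - 1)) (p.Z p.k) with hb
  have key : ∀ m j, 1 ≤ j → j ≤ p.k → p.k - j = m →
      okE K r Z x y y b (arrS K (p.Z (j-1)) (p.E (j-1)) (p.Z j)) (p.Z j)
        ((List.range (p.k - j)).map fun i => (p.E (j+i), p.Z (j+i+1))) := by
    intro m
    induction m with
    | zero =>
      intro j h1 h2 h3
      have : j = p.k := by omega
      subst this
      rw [h3]
      exact ⟨hyk, rfl⟩
    | succ m ih =>
      intro j h1 h2 h3
      have hjk : j < p.k := by omega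
      have hsfx : (List.range (p.k - j)).map (fun i => (p.E (j+i), p.Z (j+i+1)))
          = (p.E j, p.Z (j+1)) ::
            (List.range (p.k - (j+1))).map (fun i => (p.E (j+1+i), p.Z (j+1+i+1))) := by
        rw [show p.k - j = (p.k - (j+1)) + 1 from by omega, List.range_succ_eq_map,
          List.map_cons, List.map_map]
        congr 1
        apply List.map_congr_left
        intro i _
        show (p.E (j + (i+1)), p.Z (j + (i+1) + 1)) = _
        rw [show j + (i+1) = j + 1 + i from by omega]
      rw [hsfx]
      refine ⟨hedge j hjk, hpass j h1 hjk, ?_⟩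
      have := ih (j+1) (by omega) (by omega) (by omega)
      simpa using this
  have := key (p.k - 1) 1 le_rfl p.hk (by omega)
  refine ⟨b, reach_iff_okE.mpr ⟨p.E 0, p.Z 1,
    List.map (fun i => (p.E (1 + i), p.Z (1 + i + 1))) (List.range (p.k - 1)), ?_, ?_⟩⟩
  · have := hedge 0 (by have := p.hk; omega)
    rwa [hx] at this
  · have h0 : arrS K x (p.E 0) (p.Z 1) = arrS K (p.Z 0) (p.E 0) (p.Z 1) := by rw [hx]
    rw [h0]
    simpa using this

lemma conn_iff_not_rSep {K : DMG V} {r : SepRule} {Z : Set V} {x y : V} :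
    conn K r Z x y ↔ ¬ rSep K r Z x y :=
  ⟨conn_not_rSep, not_rSep_conn⟩

end MERD
namespace MERD

open Classical

variable {V : Type u}

lemma DMG_ext {G H : DMG V} (hD : G.D = H.D) (hB : G.B = H.B) : G = H := by
  cases G; cases H
  cases hD; cases hB
  rfl

lemma anc_mono {K K' : DMG V} (hD : ∀ a b, K'.D a b → K.D a b) :
    ∀ {a b}, K'.anc a b → K.anc a b := fun h =>
  Relation.ReflTransGen.mono (fun x y => hD x y) _ _ h

lemma anc_of_edges {K K' : DMG V} (h : ∀ a b, K.D a b → K'.anc a b) :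
    ∀ {a b}, K.anc a b → K'.anc a b := by
  intro a b h'
  induction h' with
  | refl => exact Relation.ReflTransGen.refl
  | tail _ e ih => exact ih.trans (h _ _ e)

lemma mem_aset_self {K : DMG V} {Z : Set V} {x y v : V} (h : v ∈ Z ∪ {x, y}) :
    v ∈ aset K Z x y := ⟨v, h, Relation.ReflTransGen.refl⟩

lemma mem_aset_Z {K : DMG V} {Z : Set V} {x y v : V} (h : v ∈ Z) : v ∈ aset K Z x y :=
  mem_aset_self (Or.inl h)

lemma mem_aset_anc {K : DMG V} {Z : Set V} {x y u v : V} (h : K.anc u v)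
    (hv : v ∈ aset K Z x y) : u ∈ aset K Z x y := by
  obtain ⟨t, ht, hanc⟩ := hv
  exact ⟨t, ht, h.trans hanc⟩

lemma mem_scc_iff {K : DMG V} {u v : V} : u ∈ K.scc v ↔ K.anc v u ∧ K.anc u v := Iff.rfl

lemma aset_mono {K K' : DMG V} (hD : ∀ a b, K'.D a b → K.D a b) {Z : Set V} {x y : V} :
    aset K' Z x y ⊆ aset K Z x y := by
  rintro v ⟨t, ht, hanc⟩
  exact ⟨t, ht, anc_mono hD hanc⟩

lemma scc_mono {K K' : DMG V} (hD : ∀ a b, K'.D a b → K.D a b) {v : V} :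
    K'.scc v ⊆ K.scc v := by
  rintro u ⟨h1, h2⟩
  exact ⟨anc_mono hD h1, anc_mono hD h2⟩

lemma ASge.ne_tb {a' a : AS} (h : ASge a' a) (hne : a ≠ AS.tb) : a' ≠ AS.tb := by
  rcases h with rfl | ⟨rfl, rfl⟩
  · exact hne
  · simp

lemma ASge.hd_of {a' a : AS} (h : ASge a' a) (hh : a' = AS.hd) : a = AS.hd := by
  rcases h with rfl | ⟨rfl, rfl⟩
  · exact hh
  · simp at hh

lemma ASge.of_hd {a' a : AS} (h : ASge a' a) (hh : a = AS.hd) : a' = AS.hd := by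
  rcases h with rfl | ⟨rfl, rfl⟩
  · exact hh
  · simp at hh

lemma isColl_ge {a' a : AS} {g : EKind} (h : ASge a' a) : isColl a' g ↔ isColl a g := by
  unfold isColl
  constructor
  · rintro ⟨h1, h2⟩; exact ⟨h.hd_of h1, h2⟩
  · rintro ⟨h1, h2⟩; exact ⟨h.of_hd h1, h2⟩

lemma pass_transfer {K K' : DMG V} {r : SepRule} {Z : Set V} {x y : V} {a a' : AS} {v w : V}
    {g : EKind} (hge : ASge a' a)
    (hA : aset K' Z x y ⊆ aset K Z x y)
    (hs : K'.scc v ⊆ K.scc v)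
    (hp : pass K' r Z x y a v g w) : pass K r Z x y a' v g w := by
  constructor
  · intro hc
    exact hA (hp.1 ((isColl_ge hge).mp hc))
  · intro hnc hv
    obtain ⟨h1, h2, h3⟩ := hp.2 (fun hc => hnc ((isColl_ge hge).mpr hc)) hv
    exact ⟨h1, hge.ne_tb h2, fun hf => hs (h3 hf)⟩

lemma arrS_ge_of_scc {K K' : DMG V} (hs : ∀ v, K'.scc v ⊆ K.scc v) (v : V) (g : EKind) (w : V) :
    ASge (arrS K v g w) (arrS K' v g w) := by
  cases g
  · exact ASge.refl _
  · show ASge (if v ∈ K.scc w then AS.tg else AS.tb) (if v ∈ K'.scc w then AS.tg else AS.tb)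
    by_cases h : v ∈ K'.scc w
    · rw [if_pos h, if_pos (hs w h)]; exact ASge.refl _
    · rw [if_neg h]
      by_cases h2 : v ∈ K.scc w
      · rw [if_pos h2]; exact Or.inr ⟨rfl, rfl⟩
      · rw [if_neg h2]; exact ASge.refl _
  · exact ASge.refl _

lemma arrS_congr {K K' : DMG V} {v w : V} (g : EKind) (hs : v ∈ K.scc w ↔ v ∈ K'.scc w) :
    arrS K v g w = arrS K' v g w := by
  cases g <;> simp only [arrS]
  rw [if_congr hs rfl rfl]

lemma eRel_mono {K K' : DMG V} (hD : ∀ a b, K'.D a b → K.D a b)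
    (hB : ∀ a b, K'.B a b → K.B a b) {v w : V} {g : EKind} (h : eRel K' v g w) :
    eRel K v g w := by
  cases g
  · exact hD _ _ h
  · exact hD _ _ h
  · exact hB _ _ h

/-- generic monotone simulation: a subgraph has fewer connections -/
lemma reach_mono {K K' : DMG V} {r : SepRule} {Z : Set V} {x y : V}
    (hD : ∀ a b, K'.D a b → K.D a b) (hB : ∀ a b, K'.B a b → K.B a b) :
    ∀ {v a}, Reach K' r Z x y v a → ∃ a', ASge a' a ∧ Reach K r Z x y v a' := by
  intro v a h
  induction h with
  | base g w he =>
    refine ⟨arrS K x g w, arrS_ge_of_scc (fun v => scc_mono hD) x g w, ?_⟩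
    exact Reach.base g w (eRel_mono hD hB he)
  | step g w hr he hp ih =>
    obtain ⟨a', hge, hr'⟩ := ih
    refine ⟨arrS K _ g w, arrS_ge_of_scc (fun v => scc_mono hD) _ g w, ?_⟩
    exact Reach.step g w hr' (eRel_mono hD hB he)
      (pass_transfer hge (aset_mono hD) (scc_mono hD) hp)

lemma conn_mono {K K' : DMG V} {r : SepRule} {Z : Set V} {x y : V}
    (hD : ∀ a b, K'.D a b → K.D a b) (hB : ∀ a b, K'.B a b → K.B a b)
    (h : conn K' r Z x y) : conn K r Z x y := by
  obtain ⟨a, hr⟩ := h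
  obtain ⟨a', _, hr'⟩ := reach_mono hD hB hr
  exact ⟨a', hr'⟩

end MERD
namespace MERD

open Classical

variable {V : Type u}

lemma ASge.ne_hd {a' a : AS} (h : ASge a' a) (hne : a ≠ AS.hd) : a' ≠ AS.hd :=
  fun hh => hne (h.hd_of hh)

lemma arrS_bwd_ge_tb {K : DMG V} {u v : V} : ASge (arrS K u EKind.bwd v) AS.tb := by
  show ASge (if u ∈ K.scc v then AS.tg else AS.tb) AS.tb
  split
  · exact Or.inr ⟨rfl, rfl⟩
  · exact ASge.refl _

lemma arrS_bwd_ne_hd {K : DMG V} {u v : V} : arrS K u EKind.bwd v ≠ AS.hd := by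
  show (if u ∈ K.scc v then AS.tg else AS.tb) ≠ AS.hd
  split <;> simp

lemma isColl_hd_bwd : isColl AS.hd EKind.bwd := ⟨rfl, Or.inl rfl⟩

lemma isColl_hd_bi : isColl AS.hd EKind.bi := ⟨rfl, Or.inr rfl⟩

lemma not_isColl_fwd {a : AS} : ¬ isColl a EKind.fwd := by
  rintro ⟨_, h | h⟩ <;> exact EKind.noConfusion h

lemma not_isColl_ne_hd {a : AS} {g : EKind} (h : a ≠ AS.hd) : ¬ isColl a g :=
  fun hc => h hc.1

lemma pass_of_notZ {K : DMG V} {r : SepRule} {Z : Set V} {x y : V} {a : AS} {v w : V} {g : EKind}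
    (hv : v ∉ Z) (hnc : ¬ isColl a g) : pass K r Z x y a v g w :=
  ⟨fun hc => absurd hc hnc, fun _ hz => absurd hz hv⟩

lemma pass_coll {K : DMG V} {r : SepRule} {Z : Set V} {x y : V} {a : AS} {v w : V} {g : EKind}
    (hc : isColl a g) (hm : v ∈ aset K Z x y) : pass K r Z x y a v g w :=
  ⟨fun _ => hm, fun hnc => absurd hc hnc⟩

lemma mem_aset_x {K : DMG V} {Z : Set V} {x y : V} : x ∈ aset K Z x y :=
  mem_aset_self (Or.inr (Set.mem_insert _ _))

lemma mem_aset_y {K : DMG V} {Z : Set V} {x y : V} : y ∈ aset K Z x y :=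
  mem_aset_self (Or.inr (Set.mem_insert_of_mem _ rfl))

end MERD
namespace MERD

open Classical

variable {V : Type u}

lemma pass_transfer₂ {K K' : DMG V} {r : SepRule} {Z : Set V} {x y : V} {a a' : AS} {v w : V}
    {g : EKind} (hge : ASge a' a)
    (hA : aset K' Z x y ⊆ aset K Z x y)
    (hs : g = EKind.fwd → w ∈ K'.scc v → w ∈ K.scc v)
    (hp : pass K' r Z x y a v g w) : pass K r Z x y a' v g w := by
  constructor
  · intro hc
    exact hA (hp.1 ((isColl_ge hge).mp hc))
  · intro hnc hv
    obtain ⟨h1, h2, h3⟩ := hp.2 (fun hc => hnc ((isColl_ge hge).mpr hc)) hv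
    exact ⟨h1, hge.ne_tb h2, fun hf => hs hf (h3 hf)⟩

lemma ASge.ne_hd' {a' a : AS} (h : ASge a' a) (hne : a' ≠ AS.hd) : a ≠ AS.hd := by
  rcases h with rfl | ⟨rfl, rfl⟩
  · exact hne
  · simp

/-- simulation invariant for configuration D -/
def SimD (K' : DMG V) (r : SepRule) (Z : Set V) (x y S F : V) (v : V) (a : AS) : Prop :=
  (v = F → (Reach K' r Z x y F AS.hd ∨ ∃ a', ASge a' a ∧ Reach K' r Z x y F a')) ∧
  (v = S → ((a = AS.hd → Reach K' r Z x y S AS.hd) ∧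
    (a = AS.tg → Reach K' r Z x y S AS.hd ∧ (Reach K' r Z x y S AS.tb ∨ S ∈ Z)) ∧
    (a = AS.tb → S ∈ Z ∨ Reach K' r Z x y S AS.tb))) ∧
  (v ≠ F → v ≠ S → ∃ a', ASge a' a ∧ Reach K' r Z x y v a')

section simD

variable {K' : DMG V} {r : SepRule} {Z : Set V} {x y S F : V}

lemma simD_F {a : AS} (hFS : F ≠ S)
    (h : Reach K' r Z x y F AS.hd ∨ ∃ a', ASge a' a ∧ Reach K' r Z x y F a') :
    SimD K' r Z x y S F F a :=
  ⟨fun _ => h, fun hE => absurd hE hFS, fun hne _ => absurd rfl hne⟩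

lemma simD_S_hd (hFS : F ≠ S) (h : Reach K' r Z x y S AS.hd) :
    SimD K' r Z x y S F S AS.hd :=
  ⟨fun hE => absurd hE (Ne.symm hFS), fun _ => ⟨fun _ => h,
      fun ht => AS.noConfusion ht, fun ht => AS.noConfusion ht⟩,
    fun _ hne => absurd rfl hne⟩

lemma simD_S_all (hFS : F ≠ S) (h1 : Reach K' r Z x y S AS.hd)
    (h2 : Reach K' r Z x y S AS.tb ∨ S ∈ Z) (a : AS) :
    SimD K' r Z x y S F S a :=
  ⟨fun hE => absurd hE (Ne.symm hFS), fun _ => ⟨fun _ => h1, fun _ => ⟨h1, h2⟩,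
      fun _ => h2.symm⟩,
    fun _ hne => absurd rfl hne⟩

lemma simD_S_tb (hFS : F ≠ S) (h : S ∈ Z ∨ Reach K' r Z x y S AS.tb) :
    SimD K' r Z x y S F S AS.tb :=
  ⟨fun hE => absurd hE (Ne.symm hFS), fun _ => ⟨fun ht => AS.noConfusion ht,
      fun ht => AS.noConfusion ht, fun _ => h⟩,
    fun _ hne => absurd rfl hne⟩

lemma simD_O {v : V} {a : AS} (hvF : v ≠ F) (hvS : v ≠ S)
    (h : ∃ a', ASge a' a ∧ Reach K' r Z x y v a') :
    SimD K' r Z x y S F v a :=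
  ⟨fun hE => absurd hE hvF, fun hE => absurd hE hvS, fun _ _ => h⟩

lemma simD_extract {a : AS} (hyZ : y ∉ Z) (h : SimD K' r Z x y S F y a) :
    ∃ a', Reach K' r Z x y y a' := by
  by_cases hyF : y = F
  · rcases h.1 hyF with h1 | ⟨a', _, h1⟩
    · exact ⟨AS.hd, hyF ▸ h1⟩
    · exact ⟨a', hyF ▸ h1⟩
  by_cases hyS : y = S
  · have h3 := h.2.1 hyS
    cases a with
    | hd => exact ⟨AS.hd, hyS ▸ h3.1 rfl⟩
    | tg => exact ⟨AS.hd, hyS ▸ (h3.2.1 rfl).1⟩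
    | tb =>
      rcases h3.2.2 rfl with hz | h4
      · exact absurd (hyS ▸ hz) hyZ
      · exact ⟨AS.tb, hyS ▸ h4⟩
  · obtain ⟨a', _, h1⟩ := h.2.2 hyF hyS
    exact ⟨a', h1⟩

end simD

end MERD
namespace MERD

open Classical

variable {V : Type u}

section b1

variable {G : DMG V} {r : SepRule} {I Z : Set V} {S F x y : V}

lemma connB1 {P : V} (hSI : S ∉ I) (hP : G.D P S) (hPI : P ∉ I) (hPF : P ≠ F)
    (hFP : G.D F P) (hBSP : G.B S P) :
    conn (G.intervene I) r Z x y → conn ((G.removeDir F S).intervene I) r Z x y := by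
  set H := G.intervene I with hH
  set H' := (G.removeDir F S).intervene I with hH'
  have hPS : P ≠ S := fun h => G.D_irrefl S (by rw [h] at hP; exact hP)
  have eFP' : H'.D F P := ⟨⟨hFP, fun hc => hPS hc.2⟩, hPI⟩
  have ePS' : H'.D P S := ⟨⟨hP, fun hc => hPF hc.1⟩, hSI⟩
  have eBSP' : H'.B S P := ⟨hBSP, hSI, hPI⟩
  have eBPS' : H'.B P S := H'.B_symm _ _ eBSP'
  have hDsub : ∀ a b, H'.D a b → H.D a b := by rintro a b ⟨⟨h1, _⟩, h2⟩; exact ⟨h1, h2⟩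
  have hanc : ∀ a b, H.anc a b ↔ H'.anc a b := by
    intro a b
    constructor
    · apply anc_of_edges
      rintro u w ⟨hd, hw⟩
      by_cases hc : u = F ∧ w = S
      · have hc1 := hc.1.symm
        have hc2 := hc.2.symm
        subst hc1; subst hc2
        exact (Relation.ReflTransGen.single eFP').tail ePS'
      · exact Relation.ReflTransGen.single ⟨⟨hd, hc⟩, hw⟩
    · exact fun h => anc_mono hDsub h
  have hscc : ∀ v u, u ∈ H.scc v ↔ u ∈ H'.scc v := by
    intro v u
    exact and_congr (hanc v u) (hanc u v)
  have hsccS : ∀ v, H.scc v ⊆ H'.scc v := fun v u h => (hscc v u).mp h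
  have haset : ∀ v, v ∈ aset H Z x y ↔ v ∈ aset H' Z x y := by
    intro v
    constructor <;> rintro ⟨t, ht, hanc'⟩
    · exact ⟨t, ht, (hanc _ _).mp hanc'⟩
    · exact ⟨t, ht, (hanc _ _).mpr hanc'⟩
  have hasetS : aset H Z x y ⊆ aset H' Z x y := fun v h => (haset v).mp h
  have harr : ∀ v g w, arrS H' v g w = arrS H v g w :=
    fun v g w => arrS_congr g ((hscc w v).symm)
  -- the P-hop towards S
  have hopPS : Reach H' r Z x y P AS.hd → Reach H' r Z x y S AS.hd := by
    intro hr
    by_cases hPZ : P ∈ Z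
    · have : Reach H' r Z x y S (arrS H' P EKind.bi S) :=
        Reach.step EKind.bi S hr eBPS' (pass_coll isColl_hd_bi (mem_aset_Z hPZ))
      simpa [arrS] using this
    · have : Reach H' r Z x y S (arrS H' P EKind.fwd S) :=
        Reach.step EKind.fwd S hr ePS' (pass_of_notZ hPZ not_isColl_fwd)
      simpa [arrS] using this
  -- membership of P in aset H' given S ∈ aset H'
  have hPaset : S ∈ aset H' Z x y → P ∈ aset H' Z x y :=
    fun h => mem_aset_anc (Relation.ReflTransGen.single ePS') h
  -- scc fact: if S ∈ H'.scc F then P ∈ H'.scc F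
  have hPsccF : S ∈ H'.scc F → P ∈ H'.scc F := by
    rintro ⟨h1, h2⟩
    exact ⟨Relation.ReflTransGen.single eFP', (Relation.ReflTransGen.single ePS').trans h2⟩
  rintro ⟨a, hr⟩
  suffices hsim : ∀ {v a}, Reach H r Z x y v a → ∃ a', ASge a' a ∧ Reach H' r Z x y v a' by
    obtain ⟨a', _, hr'⟩ := hsim hr
    exact ⟨a', hr'⟩
  intro v a h
  induction h with
  | base g w he =>
    cases g with
    | fwd =>
      by_cases hc : x = F ∧ w = S
      · have hc1 := hc.1.symm
        have hc2 := hc.2.symm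
        subst hc1; subst hc2
        refine ⟨AS.hd, ASge.refl _, ?_⟩
        exact hopPS (Reach.base EKind.fwd P eFP')
      · refine ⟨arrS H' x EKind.fwd w, by rw [harr]; exact ASge.refl _, ?_⟩
        exact Reach.base _ _ (show H'.D x w from ⟨⟨he.1, hc⟩, he.2⟩)
    | bwd =>
      by_cases hc : w = F ∧ x = S
      · have hc1 := hc.1.symm
        have hc2 := hc.2.symm
        subst hc1; subst hc2
        -- x = S, walk starts with the removed edge backwards
        have hb2 := Reach.step (K := H') (r := r) (Z := Z) (y := y) EKind.bwd F (Reach.base EKind.bi P eBSP') eFP'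
          (pass_coll isColl_hd_bwd
            (mem_aset_anc (Relation.ReflTransGen.single ePS') mem_aset_x))
        refine ⟨arrS H' P EKind.bwd F, ?_, hb2⟩
        show ASge _ (arrS H S EKind.bwd F)
        by_cases hm : S ∈ H.scc F
        · rw [arrS_bwd_tg hm, arrS_bwd_tg (hPsccF ((hscc F S).mp hm))]
          exact ASge.refl _
        · rw [arrS_bwd_tb hm]
          exact arrS_bwd_ge_tb
      · refine ⟨arrS H' x EKind.bwd w, by rw [harr]; exact ASge.refl _, ?_⟩
        refine Reach.base _ _ (show H'.D w x from ⟨⟨he.1, hc⟩, he.2⟩)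
    | bi =>
      refine ⟨arrS H' x EKind.bi w, by rw [harr]; exact ASge.refl _, ?_⟩
      exact Reach.base _ _ he
  | step g w hrv he hp ih =>
    obtain ⟨a', hge, hr'⟩ := ih
    rename_i v a
    cases g with
    | fwd =>
      by_cases hc : v = F ∧ w = S
      · have hc1 := hc.1.symm
        have hc2 := hc.2.symm
        subst hc1; subst hc2
        refine ⟨AS.hd, ASge.refl _, ?_⟩
        have hstep1 : Reach H' r Z x y P (arrS H' F EKind.fwd P) := by
          refine Reach.step EKind.fwd P hr' eFP' ?_
          constructor
          · intro hcl; exact absurd hcl not_isColl_fwd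
          · intro _ hz
            obtain ⟨h1, h2, h3⟩ := hp.2 not_isColl_fwd hz
            refine ⟨h1, hge.ne_tb h2, fun _ => ?_⟩
            exact hPsccF ((hscc F S).mp (h3 rfl))
        exact hopPS hstep1
      · refine ⟨arrS H' v EKind.fwd w, by rw [harr]; exact ASge.refl _, ?_⟩
        refine Reach.step _ _ hr' (show H'.D v w from ⟨⟨he.1, hc⟩, he.2⟩) ?_
        exact pass_transfer hge hasetS (hsccS v) hp
    | bwd =>
      by_cases hc : w = F ∧ v = S
      · have hc1 := hc.1.symm
        have hc2 := hc.2.symm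
        subst hc1; subst hc2
        -- v = S, step along the removed edge backwards
        have target : ∀ hP2 : P ∈ aset H' Z x y, ∀ hrP : Reach H' r Z x y P AS.hd,
            ∃ a'', ASge a'' (arrS H S EKind.bwd F) ∧ Reach H' r Z x y F a'' := by
          intro hP2 hrP
          refine ⟨arrS H' P EKind.bwd F, ?_, ?_⟩
          · by_cases hm : S ∈ H.scc F
            · rw [arrS_bwd_tg hm, arrS_bwd_tg (hPsccF ((hscc F S).mp hm))]
              exact ASge.refl _
            · rw [arrS_bwd_tb hm]
              exact arrS_bwd_ge_tb
          · exact Reach.step EKind.bwd F hrP eFP' (pass_coll isColl_hd_bwd hP2)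
        by_cases ha : a = AS.hd
        · subst ha
          have hS' : S ∈ aset H' Z x y := (haset S).mp (hp.1 isColl_hd_bwd)
          have ha' : a' = AS.hd := hge.of_hd rfl
          subst ha'
          have hrP : Reach H' r Z x y P AS.hd := by
            have : Reach H' r Z x y P (arrS H' S EKind.bi P) :=
              Reach.step EKind.bi P hr' eBSP' (pass_coll isColl_hd_bi hS')
            simpa [arrS] using this
          exact target (hPaset hS') hrP
        · -- noncollider passage at S
          by_cases hPZ : P ∈ Z
          · have hrP : Reach H' r Z x y P AS.hd := by
              have : Reach H' r Z x y P (arrS H' S EKind.bi P) := by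
                refine Reach.step EKind.bi P hr' eBSP' ?_
                constructor
                · intro hcl; exact absurd hcl.1 (hge.ne_hd ha)
                · intro _ hz
                  obtain ⟨h1, h2, _⟩ := hp.2 (not_isColl_ne_hd ha) hz
                  exact ⟨h1, hge.ne_tb h2, by intro h; exact absurd h (by simp)⟩
              simpa [arrS] using this
            exact target (mem_aset_Z hPZ) hrP
          · have hrP : Reach H' r Z x y P (arrS H' S EKind.bwd P) := by
              refine Reach.step EKind.bwd P hr' ePS' ?_
              constructor
              · intro hcl; exact absurd hcl.1 (hge.ne_hd ha)
              · intro _ hz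
                obtain ⟨h1, h2, _⟩ := hp.2 (not_isColl_ne_hd ha) hz
                exact ⟨h1, hge.ne_tb h2, by intro h; exact absurd h (by simp)⟩
            refine ⟨arrS H' P EKind.bwd F, ?_, ?_⟩
            · by_cases hm : S ∈ H.scc F
              · rw [arrS_bwd_tg hm, arrS_bwd_tg (hPsccF ((hscc F S).mp hm))]
                exact ASge.refl _
              · rw [arrS_bwd_tb hm]
                exact arrS_bwd_ge_tb
            · refine Reach.step EKind.bwd F hrP eFP' ?_
              exact pass_of_notZ hPZ (not_isColl_ne_hd arrS_bwd_ne_hd)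
      · refine ⟨arrS H' v EKind.bwd w, by rw [harr]; exact ASge.refl _, ?_⟩
        refine Reach.step _ _ hr' (show H'.D w v from ⟨⟨he.1, hc⟩, he.2⟩) ?_
        exact pass_transfer hge hasetS (hsccS v) hp
    | bi =>
      refine ⟨arrS H' v EKind.bi w, by rw [harr]; exact ASge.refl _, ?_⟩
      exact Reach.step _ _ hr' he (pass_transfer hge hasetS (hsccS v) hp)

end b1

end MERD
namespace MERD

open Classical

variable {V : Type u}

section confC

variable {G : DMG V} {r : SepRule} {I Z : Set V} {S F x y : V}

lemma connCK {K : DMG V}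
    (hKD : ∀ a b, K.D a b → G.D a b ∧ b ∉ I)
    (hKB : ∀ a b, K.B a b → G.B a b ∧ a ∉ I ∧ b ∉ I)
    (hKin : ∀ v, v ∈ I → G.D v S → K.D v S)
    (hDFS : G.D F S)
    (hPa : ∀ v, G.anc v S → v = S ∨ G.D v S)
    (hPaI : ∀ Q, G.D Q S → Q ≠ F → Q ∈ I)
    (hxy : x ≠ y)
    (hCC : ∀ T ∈ Z ∪ {x, y}, T ∈ I ∨ T = S) :
    conn K r Z x y ↔
      ((x = S ∧ G.D y S) ∨ (y = S ∧ G.D x S) ∨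
        (x ≠ S ∧ y ≠ S ∧ S ∈ Z ∧ G.D x S ∧ G.D y S)) := by
  have hxM : x ∈ Z ∪ {x, y} := Or.inr (Set.mem_insert _ _)
  have hyM : y ∈ Z ∪ {x, y} := Or.inr (Set.mem_insert_of_mem _ rfl)
  have hancG : ∀ {a b}, K.anc a b → G.anc a b :=
    fun h => anc_mono (fun a b hd => (hKD a b hd).1) h
  have hintoI : ∀ {u t}, K.anc u t → t ∈ I → u = t := by
    intro u t h ht
    induction h with
    | refl => rfl
    | tail _ e _ => exact absurd ht (hKD _ _ e).2
  have hasetC : ∀ v, v ∈ aset K Z x y → v ∉ I → v = S ∨ G.D v S := by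
    rintro v ⟨t, ht, hanc⟩ hvI
    rcases hCC t ht with htI | rfl
    · exact absurd (hintoI hanc htI ▸ htI) hvI
    · exact hPa v (hancG hanc)
  -- classification of a vertex pointing into S or F
  have hsrc : ∀ v w, G.D v w → (w = S ∨ w = F) → v ∉ I → v = S ∨ v = F := by
    rintro v w hd (hw | hw) hvI
    · by_cases hvF : v = F
      · exact Or.inr hvF
      · exact absurd (hPaI v (hw ▸ hd) hvF) hvI
    · have hanc : G.anc v S := (hw ▸ Relation.ReflTransGen.single hd : G.anc v F).tail hDFS
      rcases hPa v hanc with hvS | hds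
      · exact Or.inl hvS
      · by_cases hvF : v = F
        · exact Or.inr hvF
        · exact absurd (hPaI v hds hvF) hvI
  constructor
  · rintro ⟨a, hr⟩
    -- the main invariant
    have hInv : ∀ {v a}, Reach K r Z x y v a →
        (a = AS.hd → v ∉ I ∧ ((v = S ∨ v = F) → (x = S ∨ G.D x S))) ∧
        (a ≠ AS.hd → (x = S ∨ G.D x S) ∧ G.anc v S) := by
      intro v a h
      induction h with
      | base g w he =>
        cases g with
        | fwd =>
          refine ⟨fun _ => ⟨(hKD _ _ he).2, ?_⟩, fun h => absurd rfl h⟩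
          rintro (hw | hw)
          · exact Or.inr (hw ▸ (hKD _ _ he).1)
          · have hanc : G.anc x S :=
              (hw ▸ Relation.ReflTransGen.single (hKD _ _ he).1 : G.anc x F).tail hDFS
            exact hPa x hanc
        | bwd =>
          refine ⟨fun h => absurd h arrS_bwd_ne_hd, fun _ => ?_⟩
          have hxI : x ∉ I := (hKD _ _ he).2
          have hxS : x = S := by
            rcases hCC x hxM with h | h
            · exact absurd h hxI
            · exact h
          subst hxS
          exact ⟨Or.inl rfl, Relation.ReflTransGen.single (hKD _ _ he).1⟩
        | bi =>
          refine ⟨fun _ => ⟨(hKB _ _ he).2.2, fun _ => ?_⟩, fun h => absurd rfl h⟩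
          left
          rcases hCC x hxM with h | h
          · exact absurd h (hKB _ _ he).2.1
          · exact h
      | step g w hrv he hp ih =>
        rename_i v a
        cases g with
        | fwd =>
          refine ⟨fun _ => ⟨(hKD _ _ he).2, ?_⟩, fun h => absurd rfl h⟩
          intro hw
          -- need ρ
          by_cases ha : a = AS.hd
          · obtain ⟨hvI, hρ⟩ := ih.1 ha
            exact hρ (hsrc v w (hKD _ _ he).1 hw hvI)
          · exact (ih.2 ha).1
        | bwd =>
          refine ⟨fun h => absurd h arrS_bwd_ne_hd, fun _ => ?_⟩
          by_cases ha : a = AS.hd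
          · subst ha
            have hvA : v ∈ aset K Z x y := hp.1 isColl_hd_bwd
            obtain ⟨hvI, hρ⟩ := ih.1 rfl
            rcases hasetC v hvA hvI with hvS | hds
            · exact ⟨hρ (Or.inl hvS),
                (hvS ▸ Relation.ReflTransGen.single (hKD _ _ he).1 : G.anc w S)⟩
            · by_cases hvF : v = F
              · refine ⟨hρ (Or.inr hvF), ?_⟩
                exact (hvF ▸ Relation.ReflTransGen.single (hKD _ _ he).1 : G.anc w F).tail hDFS
              · exact absurd (hPaI v hds hvF) hvI
          · obtain ⟨hρ, hanc⟩ := ih.2 ha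
            exact ⟨hρ, (Relation.ReflTransGen.single (hKD _ _ he).1).trans hanc⟩
        | bi =>
          refine ⟨fun _ => ⟨(hKB _ _ he).2.2, fun _ => ?_⟩, fun h => absurd rfl h⟩
          by_cases ha : a = AS.hd
          · have hvA : v ∈ aset K Z x y := hp.1 (ha.symm ▸ isColl_hd_bi)
            obtain ⟨hvI, hρ⟩ := ih.1 ha
            rcases hasetC v hvA hvI with hvS | hds
            · exact hρ (Or.inl hvS)
            · by_cases hvF : v = F
              · exact hρ (Or.inr hvF)
              · exact absurd (hPaI v hds hvF) hvI
          · exact (ih.2 ha).1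
    have hy := hInv hr
    by_cases hxS : x = S
    · left
      refine ⟨hxS, ?_⟩
      have hyS : y ≠ S := fun h => hxy (hxS.trans h.symm)
      have hyI : y ∈ I := by
        rcases hCC y hyM with h | h
        · exact h
        · exact absurd h hyS
      by_cases ha : a = AS.hd
      · exact absurd hyI (hy.1 ha).1
      · rcases hPa y (hy.2 ha).2 with h | h
        · exact absurd h hyS
        · exact h
    · by_cases hyS : y = S
      · right; left
        refine ⟨hyS, ?_⟩
        by_cases ha : a = AS.hd
        · rcases (hy.1 ha).2 (Or.inl hyS) with h | h
          · exact absurd h hxS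
          · exact h
        · rcases (hy.2 ha).1 with h | h
          · exact absurd h hxS
          · exact h
      · right; right
        have hyI : y ∈ I := by
          rcases hCC y hyM with h | h
          · exact h
          · exact absurd h hyS
        have ha : a ≠ AS.hd := by
          intro h
          exact absurd hyI (hy.1 h).1
        have hDyS : G.D y S := by
          rcases hPa y (hy.2 ha).2 with h | h
          · exact absurd h hyS
          · exact h
        have hDxS : G.D x S := by
          rcases (hy.2 ha).1 with h | h
          · exact absurd h hxS
          · exact h
        refine ⟨hxS, hyS, ?_, hDxS, hDyS⟩
        -- S ∈ Z, else no walk can reach y at all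
        by_contra hSZ
        have hasetI : ∀ v, v ∈ aset K Z x y → v ∈ I := by
          rintro v ⟨t, ht, hanc⟩
          rcases hCC t ht with htI | rfl
          · exact (hintoI hanc htI) ▸ htI
          · rcases ht with h | h | h
            · exact absurd h hSZ
            · exact absurd h.symm hxS
            · exact absurd h.symm hyS
        have hInv3 : ∀ {v a}, Reach K r Z x y v a → a = AS.hd ∧ v ∉ I := by
          intro v a h
          induction h with
          | base g w he =>
            cases g with
            | fwd => exact ⟨rfl, (hKD _ _ he).2⟩
            | bwd =>
              have hxI : x ∉ I := (hKD _ _ he).2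
              rcases hCC x hxM with h | h
              · exact absurd h hxI
              · exact absurd h hxS
            | bi =>
              rcases hCC x hxM with h | h
              · exact absurd h (hKB _ _ he).2.1
              · exact absurd h hxS
          | step g w hrv he hp ih =>
            cases g with
            | fwd => exact ⟨rfl, (hKD _ _ he).2⟩
            | bwd =>
              have := hp.1 (ih.1.symm ▸ isColl_hd_bwd)
              exact absurd (hasetI _ this) ih.2
            | bi =>
              have := hp.1 (ih.1.symm ▸ isColl_hd_bi)
              exact absurd (hasetI _ this) ih.2
        exact absurd (hInv3 hr).2 (fun h => h hyI)
  · rintro (⟨rfl, hDyS⟩ | ⟨rfl, hDxS⟩ | ⟨hxS, hyS, hSZ, hDxS, hDyS⟩)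
    · -- x = S : single backward step
      have hyS : y ≠ x := fun h => hxy h.symm
      have hyI : y ∈ I := by
        rcases hCC y hyM with h | h
        · exact h
        · exact absurd h hyS
      exact ⟨_, Reach.base EKind.bwd y (hKin y hyI hDyS)⟩
    · -- y = S : single forward step
      have hxI : x ∈ I := by
        rcases hCC x hxM with h | h
        · exact h
        · exact absurd h hxy
      exact ⟨_, Reach.base EKind.fwd y (hKin x hxI hDxS)⟩
    · have hxI : x ∈ I := by
        rcases hCC x hxM with h | h
        · exact h
        · exact absurd h hxS
      have hyI : y ∈ I := by
        rcases hCC y hyM with h | h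
        · exact h
        · exact absurd h hyS
      refine ⟨_, Reach.step EKind.bwd y (Reach.base EKind.fwd S (hKin x hxI hDxS))
        (hKin y hyI hDyS) ?_⟩
      exact pass_coll isColl_hd_bwd (mem_aset_Z hSZ)
    
lemma connC' (hSI : S ∉ I) (hFI : F ∉ I) (hFS : F ≠ S) (hDFS : G.D F S)
    (hPa : ∀ v, G.anc v S → v = S ∨ G.D v S)
    (hPaI : ∀ Q, G.D Q S → Q ≠ F → Q ∈ I)
    (hxy : x ≠ y)
    (hCC : ∀ T ∈ Z ∪ {x, y}, T ∈ I ∨ T = S) :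
    (conn (G.intervene I) r Z x y ↔ conn ((G.removeDir F S).intervene I) r Z x y) := by
  have h1 := connCK (G := G) (K := G.intervene I) (r := r) (I := I) (Z := Z) (S := S) (F := F)
    (x := x) (y := y)
    (fun a b h => ⟨h.1, h.2⟩) (fun a b h => h) (fun v hv hd => ⟨hd, hSI⟩)
    hDFS hPa hPaI hxy hCC
  have h2 := connCK (G := G) (K := (G.removeDir F S).intervene I) (r := r) (I := I) (Z := Z)
    (S := S) (F := F) (x := x) (y := y)
    (fun a b h => ⟨h.1.1, h.2⟩) (fun a b h => h)
    (fun v hv hd => ⟨⟨hd, fun hc => hFI (by rw [← hc.1]; exact hv)⟩, hSI⟩)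
    hDFS hPa hPaI hxy hCC
  rw [h1, h2]

end confC

end MERD
namespace MERD

open Classical

variable {V : Type u}

section confD

variable {G : DMG V} {r : SepRule} {I Z : Set V} {S F x y : V}

lemma connD' (hSI : S ∉ I) (hFI : F ∉ I) (hFS : F ≠ S) (hDFS : G.D F S)
    (hPa : ∀ v, G.anc v S → v = S ∨ G.D v S)
    (hPaI : ∀ Q, G.D Q S → Q ≠ F → Q ∈ I)
    (hBSF : G.B S F)
    (hFD : ∀ X, X ≠ F → G.D F X)
    (hyZ : y ∉ Z)
    (hT : ∃ T ∈ Z ∪ {x, y}, T ∉ I ∧ T ≠ S) :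
    conn (G.intervene I) r Z x y → conn ((G.removeDir F S).intervene I) r Z x y := by
  set H := G.intervene I with hH
  set H' := (G.removeDir F S).intervene I with hH'
  have hDsub : ∀ a b, H'.D a b → H.D a b := by rintro a b ⟨⟨h1, _⟩, h2⟩; exact ⟨h1, h2⟩
  have eBSF' : H'.B S F := ⟨hBSF, hSI, hFI⟩
  have eBFS' : H'.B F S := H'.B_symm _ _ eBSF'
  have hancG : ∀ {a b}, H.anc a b → G.anc a b :=
    fun h => anc_mono (K := G) (K' := H) (fun a b hd => hd.1) h
  have hancG' : ∀ {a b}, H'.anc a b → G.anc a b :=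
    fun h => anc_mono (K := G) (K' := H') (fun a b hd => hd.1.1) h
  have hintoI : ∀ {u t}, H.anc u t → t ∈ I → u = t := by
    intro u t h ht
    induction h with
    | refl => rfl
    | tail _ e _ => exact absurd ht e.2
  have hintoI' : ∀ {u t}, H'.anc u t → t ∈ I → u = t :=
    fun h ht => hintoI (anc_mono hDsub h) ht
  have f8 : ¬ H'.anc F S := by
    intro h
    rcases Relation.ReflTransGen.cases_tail h with h1 | ⟨c, hFc, hcS⟩
    · exact hFS h1.symm
    · have hcF : c ≠ F := fun hc => hcS.1.2 ⟨hc, rfl⟩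
      exact hcF (hintoI' hFc (hPaI c hcS.1.1 hcF)).symm
  have k1 : ∀ {a b}, H.anc a b → H'.anc a b ∨ (H'.anc a F ∧ H'.anc S b) := by
    intro a b h
    induction h with
    | refl => exact Or.inl Relation.ReflTransGen.refl
    | @tail m c hac e ih =>
      by_cases hmc : m = F ∧ c = S
      · have h1 := hmc.1.symm
        have h2 := hmc.2.symm
        subst h1; subst h2
        refine Or.inr ⟨?_, Relation.ReflTransGen.refl⟩
        rcases ih with h | ⟨h, _⟩
        · exact h
        · exact h
      · have e' : H'.D m c := ⟨⟨e.1, hmc⟩, e.2⟩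
        rcases ih with h | ⟨h1, h2⟩
        · exact Or.inl (h.tail e')
        · exact Or.inr ⟨h1, h2.tail e'⟩
  have hFaset : F ∈ aset H' Z x y := by
    obtain ⟨T, hTm, hTI, hTS⟩ := hT
    by_cases hTF : T = F
    · exact mem_aset_self (hTF ▸ hTm)
    · exact mem_aset_anc
        (Relation.ReflTransGen.single ⟨⟨hFD T hTF, fun hc => hTS hc.2⟩, hTI⟩)
        (mem_aset_self hTm)
  have haset : ∀ {v}, v ∈ aset H Z x y → v ∈ aset H' Z x y := by
    rintro v ⟨t, ht, hanc⟩
    rcases k1 hanc with h | ⟨h1, _⟩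
    · exact ⟨t, ht, h⟩
    · exact mem_aset_anc h1 hFaset
  have hasetsub : aset H Z x y ⊆ aset H' Z x y := fun v h => haset h
  have hcolF : ∀ v, H'.anc v F → v = S ∨ v = F ∨ v ∈ I := by
    intro v h
    by_cases hvF : v = F
    · exact Or.inr (Or.inl hvF)
    · rcases hPa v ((hancG' h).tail hDFS) with h1 | h1
      · exact Or.inl h1
      · exact Or.inr (Or.inr (hPaI v h1 hvF))
  have hq : ∀ v, v ≠ F → H'.anc v F → H'.anc S v → v = S := by
    intro v hvF h1 h2
    rcases hcolF v h1 with h | h | h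
    · exact h
    · exact absurd h hvF
    · exact (hintoI' h2 h).symm
  have hlab : ∀ v w, ¬(v = F ∧ w = S) → ¬(v = S ∧ w = F) →
      (v ∈ H.scc w ↔ v ∈ H'.scc w) := by
    intro v w hx1 hx2
    constructor
    · rintro ⟨h1, h2⟩
      rcases k1 h1 with C1 | ⟨C2a, C2b⟩ <;> rcases k1 h2 with D1 | ⟨D2a, D2b⟩
      · exact ⟨C1, D1⟩
      · by_cases hvF : v = F
        · by_cases hwF : w = F
          · rw [hvF, hwF]; exact ⟨Relation.ReflTransGen.refl, Relation.ReflTransGen.refl⟩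
          · have hwS : w ≠ S := fun h => hx1 ⟨hvF, h⟩
            exact absurd (hq w hwF (hvF ▸ C1) D2b) hwS
        · rcases hcolF v D2a with h | h | h
          · exact ⟨C1, h.symm ▸ D2b⟩
          · exact absurd h hvF
          · have hwv := hintoI h1 h
            rw [hwv]; exact ⟨Relation.ReflTransGen.refl, Relation.ReflTransGen.refl⟩
      · by_cases hwF : w = F
        · by_cases hvF : v = F
          · rw [hvF, hwF]; exact ⟨Relation.ReflTransGen.refl, Relation.ReflTransGen.refl⟩
          · have hvS : v ≠ S := fun h => hx2 ⟨h, hwF⟩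
            exact absurd (hq v hvF (hwF ▸ D1) C2b) hvS
        · rcases hcolF w C2a with h | h | h
          · exact ⟨h.symm ▸ C2b, D1⟩
          · exact absurd h hwF
          · have hvw := hintoI h2 h
            rw [hvw]; exact ⟨Relation.ReflTransGen.refl, Relation.ReflTransGen.refl⟩
      · by_cases hvF : v = F
        · by_cases hwF : w = F
          · rw [hvF, hwF]; exact ⟨Relation.ReflTransGen.refl, Relation.ReflTransGen.refl⟩
          · exact absurd ⟨hvF, hq w hwF C2a D2b⟩ hx1
        · have hvS := hq v hvF D2a C2b
          by_cases hwF : w = F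
          · exact absurd ⟨hvS, hwF⟩ hx2
          · have hwS := hq w hwF C2a D2b
            rw [hvS, hwS]; exact ⟨Relation.ReflTransGen.refl, Relation.ReflTransGen.refl⟩
    · rintro ⟨h1, h2⟩
      exact ⟨anc_mono hDsub h1, anc_mono hDsub h2⟩
  have sF' : F ∉ H'.scc S := fun h => f8 h.2
  have hsccS_eq : ∀ w, w ≠ F → w ∈ H.scc S → w = S := by
    rintro w hwF ⟨hm1, hm2⟩
    rcases hPa w (hancG hm2) with h | h
    · exact h
    · exact (hintoI hm1 (hPaI w h hwF)).symm
  have hE' : ∀ {v g w}, eRel H v g w → ¬(g = EKind.fwd ∧ v = F ∧ w = S) →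
      ¬(g = EKind.bwd ∧ v = S ∧ w = F) → eRel H' v g w := by
    intro v g w he h1 h2
    cases g
    · exact ⟨⟨he.1, fun hc => h1 ⟨rfl, hc⟩⟩, he.2⟩
    · exact ⟨⟨he.1, fun hc => h2 ⟨rfl, hc.2, hc.1⟩⟩, he.2⟩
    · exact he
  -- hops between F and S in H'
  have hopFS : ∀ {b}, Reach H' r Z x y F b →
      (F ∈ Z → b ≠ AS.hd → (r = SepRule.s ∧ b ≠ AS.tb)) → Reach H' r Z x y S AS.hd := by
    intro b hb hcond
    by_cases hbhd : b = AS.hd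
    · subst hbhd
      exact Reach.step EKind.bi S hb eBFS' (pass_coll isColl_hd_bi hFaset)
    · refine Reach.step EKind.bi S hb eBFS'
        ⟨fun hcl => absurd hcl.1 hbhd, fun _ hz => ?_⟩
      obtain ⟨h1, h2⟩ := hcond hz hbhd
      exact ⟨h1, h2, fun hbad => nomatch hbad⟩
  have hopFStb : ∀ {b}, H'.D S F → Reach H' r Z x y F b →
      (F ∈ Z → b ≠ AS.hd → (r = SepRule.s ∧ b ≠ AS.tb)) → Reach H' r Z x y S AS.tb := by
    intro b hSF hb hcond
    have hstep : Reach H' r Z x y S (arrS H' F EKind.bwd S) := by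
      by_cases hbhd : b = AS.hd
      · subst hbhd
        exact Reach.step EKind.bwd S hb hSF (pass_coll isColl_hd_bwd hFaset)
      · refine Reach.step EKind.bwd S hb hSF
          ⟨fun hcl => absurd hcl.1 hbhd, fun _ hz => ?_⟩
        obtain ⟨h1, h2⟩ := hcond hz hbhd
        exact ⟨h1, h2, fun hbad => nomatch hbad⟩
    rwa [arrS_bwd_tb sF'] at hstep
  rintro ⟨a0, hr0⟩
  suffices main : ∀ {v a}, Reach H r Z x y v a → SimD H' r Z x y S F v a by
    obtain ⟨a', hra⟩ := simD_extract hyZ (main hr0)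
    exact ⟨a', hra⟩
  intro v a h
  induction h with
  | base g w he =>
    cases g with
    | fwd =>
      by_cases hc : x = F ∧ w = S
      · have hb : Reach H' r Z x y S AS.hd := by
          refine Reach.base EKind.bi S ?_
          show H'.B x S
          rw [hc.1]; exact eBFS'
        rw [hc.2]
        exact simD_S_hd hFS hb
      · have he' : eRel H' x EKind.fwd w := hE' he (fun h => hc h.2) (fun h => nomatch h.1)
        have hb := Reach.base (K := H') (r := r) (Z := Z) (y := y) EKind.fwd w he'
        by_cases hwF : w = F
        · rw [hwF]; exact simD_F hFS (Or.inl (hwF ▸ hb))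
        by_cases hwS : w = S
        · rw [hwS]; exact simD_S_hd hFS (hwS ▸ hb)
        · exact simD_O hwF hwS ⟨AS.hd, Or.inl rfl, hb⟩
    | bwd =>
      by_cases hc : x = S ∧ w = F
      · have hb : Reach H' r Z x y F AS.hd := by
          refine Reach.base EKind.bi F ?_
          show H'.B x F
          rw [hc.1]; exact eBSF'
        rw [hc.2]
        exact simD_F hFS (Or.inl hb)
      by_cases hc2 : x = F ∧ w = S
      · have h1 := hc2.1.symm
        have h2 := hc2.2.symm
        subst h1; subst h2
        have he' : eRel H' F EKind.bwd S := ⟨⟨he.1, fun hcc => hFS hcc.1.symm⟩, he.2⟩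
        have hb1 : Reach H' r Z F y S AS.hd := Reach.base EKind.bi S eBFS'
        have hb2 : Reach H' r Z F y S AS.tb := by
          have hb := Reach.base (K := H') (r := r) (Z := Z) (y := y) EKind.bwd S he'
          rwa [arrS_bwd_tb sF'] at hb
        exact simD_S_all hFS hb1 (Or.inl hb2) _
      · have he' : eRel H' x EKind.bwd w :=
          hE' he (fun h => nomatch h.1) (fun h => hc ⟨h.2.1, h.2.2⟩)
        have hb := Reach.base (K := H') (r := r) (Z := Z) (y := y) EKind.bwd w he'
        by_cases hwF : w = F
        · have hlabx : x ∈ H.scc F ↔ x ∈ H'.scc F :=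
            hlab x F (fun h => hFS h.2) (fun h => hc ⟨h.1, hwF⟩)
          rw [hwF]
          refine simD_F hFS (Or.inr ⟨arrS H' x EKind.bwd F, ?_, hwF ▸ hb⟩)
          rw [arrS_congr EKind.bwd hlabx.symm]
          exact ASge.refl _
        by_cases hwS : w = S
        · have hws := hwS.symm; subst hws
          have hxF : x ≠ F := fun h => hc2 ⟨h, rfl⟩
          have hxnm : x ∉ H.scc S := by
            intro hm
            have hxS := hsccS_eq x hxF hm
            rw [hxS] at he
            exact G.D_irrefl S he.1
          rw [arrS_bwd_tb hxnm]
          refine simD_S_tb hFS (Or.inr ?_)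
          have hxnm' : x ∉ H'.scc S := fun hm => hxnm (scc_mono hDsub hm)
          rwa [arrS_bwd_tb hxnm'] at hb
        · have hlabx : x ∈ H.scc w ↔ x ∈ H'.scc w :=
            hlab x w (fun h => hc2 ⟨h.1, h.2⟩) (fun h => hc ⟨h.1, h.2⟩)
          refine simD_O hwF hwS ⟨arrS H' x EKind.bwd w, ?_, hb⟩
          rw [arrS_congr EKind.bwd hlabx.symm]
          exact ASge.refl _
    | bi =>
      have hb := Reach.base (K := H') (r := r) (Z := Z) (y := y) EKind.bi w (show H'.B x w from he)
      by_cases hwF : w = F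
      · rw [hwF]; exact simD_F hFS (Or.inl (hwF ▸ hb))
      by_cases hwS : w = S
      · rw [hwS]; exact simD_S_hd hFS (hwS ▸ hb)
      · exact simD_O hwF hwS ⟨AS.hd, Or.inl rfl, hb⟩
  | @step v a g w hrv he hp ih =>
    cases g with
    | fwd =>
      by_cases hcFS : v = F ∧ w = S
      · have h1 := hcFS.1.symm
        have h2 := hcFS.2.symm
        subst h1; subst h2
        have hb : Reach H' r Z x y S AS.hd := by
          rcases ih.1 rfl with ihl | ⟨a', hge, hra⟩
          · exact hopFS ihl (fun _ h => absurd rfl h)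
          · refine hopFS hra (fun hz hne => ?_)
            obtain ⟨hr1, hr2, _⟩ := hp.2 not_isColl_fwd hz
            exact ⟨hr1, hge.ne_tb hr2⟩
        exact simD_S_hd hFS hb
      · have he' : eRel H' v EKind.fwd w := hE' he (fun h => hcFS h.2) (fun h => nomatch h.1)
        by_cases hwS : w = S
        · have hws := hwS.symm; subst hws
          have hvF : v ≠ F := fun h => hcFS ⟨h, rfl⟩
          have hvS : v ≠ S := fun h => G.D_irrefl S (by rw [h] at he; exact he.1)
          obtain ⟨a', hge, hra⟩ := ih.2.2 hvF hvS
          have hb : Reach H' r Z x y S (arrS H' v EKind.fwd S) := by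
            refine Reach.step _ _ hra he' ⟨fun hcl => absurd hcl not_isColl_fwd,
              fun _ hz => ?_⟩
            obtain ⟨hr1, hr2, hr3⟩ := hp.2 not_isColl_fwd hz
            refine ⟨hr1, hge.ne_tb hr2, fun _ => ?_⟩
            exact (hlab S v (fun hh => hFS hh.1.symm) (fun hh => hvF hh.2)).mp (hr3 rfl)
          exact simD_S_hd hFS hb
        by_cases hwF : w = F
        · have hwf := hwF.symm; subst hwf
          by_cases hvS : v = S
          · have hvs := hvS.symm; subst hvs
            by_cases hz : S ∈ Z
            · have hd1 : Reach H' r Z x y S AS.hd := by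
                cases a with
                | hd => exact (ih.2.1 rfl).1 rfl
                | tg => exact ((ih.2.1 rfl).2.1 rfl).1
                | tb =>
                  obtain ⟨_, h2, _⟩ :=
                    hp.2 (not_isColl_ne_hd (fun h => AS.noConfusion h)) hz
                  exact absurd rfl h2
              exact simD_F hFS (Or.inl
                (Reach.step EKind.bi F hd1 eBSF' (pass_coll isColl_hd_bi (mem_aset_Z hz))))
            · have hex : ∃ b, Reach H' r Z x y S b := by
                cases a with
                | hd => exact ⟨AS.hd, (ih.2.1 rfl).1 rfl⟩
                | tg => exact ⟨AS.hd, ((ih.2.1 rfl).2.1 rfl).1⟩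
                | tb =>
                  rcases (ih.2.1 rfl).2.2 rfl with h | h
                  · exact absurd h hz
                  · exact ⟨AS.tb, h⟩
              obtain ⟨b, hbS⟩ := hex
              exact simD_F hFS (Or.inl
                (Reach.step EKind.fwd F hbS he' (pass_of_notZ hz not_isColl_fwd)))
          · by_cases hvF : v = F
            · rw [hvF] at he
              exact absurd he.1 (G.D_irrefl F)
            · obtain ⟨a', hge, hra⟩ := ih.2.2 hvF hvS
              have hb : Reach H' r Z x y F (arrS H' v EKind.fwd F) := by
                refine Reach.step _ _ hra he' ⟨fun hcl => absurd hcl not_isColl_fwd,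
                  fun _ hz => ?_⟩
                obtain ⟨hr1, hr2, hr3⟩ := hp.2 not_isColl_fwd hz
                refine ⟨hr1, hge.ne_tb hr2, fun _ => ?_⟩
                exact (hlab F v (fun hh => hvS hh.2) (fun hh => hFS hh.1)).mp (hr3 rfl)
              exact simD_F hFS (Or.inl hb)
        · -- w ∉ {F, S}
          by_cases hvF : v = F
          · have hvf := hvF.symm; subst hvf
            have hpnew : ∀ b', ASge b' a → pass H' r Z x y b' F EKind.fwd w := by
              intro b' hge
              refine ⟨fun hcl => absurd hcl not_isColl_fwd, fun _ hz => ?_⟩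
              obtain ⟨hr1, hr2, hr3⟩ := hp.2 not_isColl_fwd hz
              refine ⟨hr1, hge.ne_tb hr2, fun _ => ?_⟩
              exact (hlab w F (fun hh => hFS hh.2) (fun hh => hwS hh.1)).mp (hr3 rfl)
            rcases ih.1 rfl with ihl | ⟨a', hge, hra⟩
            · by_cases hahd : a = AS.hd
              · exact simD_O hwF hwS ⟨AS.hd, Or.inl rfl,
                  Reach.step _ _ ihl he' (hpnew AS.hd (hahd ▸ ASge.refl _))⟩
              · -- a ≠ hd : hd still passes all noncollider conditions? need b' := hd with ASge hd a fails.
                refine simD_O hwF hwS ⟨AS.hd, Or.inl rfl, Reach.step _ _ ihl he'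
                  ⟨fun hcl => absurd hcl not_isColl_fwd, fun _ hz => ?_⟩⟩
                obtain ⟨hr1, hr2, hr3⟩ := hp.2 not_isColl_fwd hz
                refine ⟨hr1, fun h => AS.noConfusion h, fun _ => ?_⟩
                exact (hlab w F (fun hh => hFS hh.2) (fun hh => hwS hh.1)).mp (hr3 rfl)
            · exact simD_O hwF hwS ⟨AS.hd, Or.inl rfl,
                Reach.step _ _ hra he' (hpnew a' hge)⟩
          by_cases hvS : v = S
          · have hvs := hvS.symm; subst hvs
            have hz : S ∉ Z := by
              intro hz
              have h3 := (hp.2 not_isColl_fwd hz).2.2 rfl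
              exact hwS (hsccS_eq w hwF h3)
            have hex : ∃ b, Reach H' r Z x y S b := by
              cases a with
              | hd => exact ⟨AS.hd, (ih.2.1 rfl).1 rfl⟩
              | tg => exact ⟨AS.hd, ((ih.2.1 rfl).2.1 rfl).1⟩
              | tb =>
                rcases (ih.2.1 rfl).2.2 rfl with h | h
                · exact absurd h hz
                · exact ⟨AS.tb, h⟩
            obtain ⟨b, hbS⟩ := hex
            exact simD_O hwF hwS ⟨AS.hd, Or.inl rfl,
              Reach.step _ _ hbS he' (pass_of_notZ hz not_isColl_fwd)⟩
          · obtain ⟨a', hge, hra⟩ := ih.2.2 hvF hvS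
            have hb : Reach H' r Z x y w (arrS H' v EKind.fwd w) := by
              refine Reach.step _ _ hra he' ⟨fun hcl => absurd hcl not_isColl_fwd,
                fun _ hz => ?_⟩
              obtain ⟨hr1, hr2, hr3⟩ := hp.2 not_isColl_fwd hz
              refine ⟨hr1, hge.ne_tb hr2, fun _ => ?_⟩
              exact (hlab w v (fun hh => hwF hh.1) (fun hh => hwS hh.1)).mp (hr3 rfl)
            exact simD_O hwF hwS ⟨AS.hd, Or.inl rfl, hb⟩
    | bwd =>
      by_cases hcSF : v = S ∧ w = F
      · have h1 := hcSF.1.symm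
        have h2 := hcSF.2.symm
        subst h1; subst h2
        have hb : Reach H' r Z x y F AS.hd := by
          cases a with
          | hd =>
            have hS' := haset (hp.1 isColl_hd_bwd)
            exact Reach.step EKind.bi F ((ih.2.1 rfl).1 rfl) eBSF'
              (pass_coll isColl_hd_bi hS')
          | tg =>
            obtain ⟨hd1, hd2⟩ := (ih.2.1 rfl).2.1 rfl
            by_cases hz : S ∈ Z
            · exact Reach.step EKind.bi F hd1 eBSF' (pass_coll isColl_hd_bi (mem_aset_Z hz))
            · rcases hd2 with htb | hz'
              · exact Reach.step EKind.bi F htb eBSF'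
                  (pass_of_notZ hz (not_isColl_ne_hd (fun h => AS.noConfusion h)))
              · exact absurd hz' hz
          | tb =>
            have hz : S ∉ Z := fun hz =>
              (hp.2 (not_isColl_ne_hd (fun h => AS.noConfusion h)) hz).2.1 rfl
            rcases (ih.2.1 rfl).2.2 rfl with h | htb
            · exact absurd h hz
            · exact Reach.step EKind.bi F htb eBSF'
                (pass_of_notZ hz (not_isColl_ne_hd (fun h => AS.noConfusion h)))
        exact simD_F hFS (Or.inl hb)
      by_cases hcFS2 : v = F ∧ w = S
      · have h1 := hcFS2.1.symm
        have h2 := hcFS2.2.symm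
        subst h1; subst h2
        -- he : H.D S F
        have he' : H'.D S F := ⟨⟨he.1, fun hcc => hFS hcc.1.symm⟩, he.2⟩
        have hcond : ∀ {b'}, ASge b' a → F ∈ Z → b' ≠ AS.hd → (r = SepRule.s ∧ b' ≠ AS.tb) := by
          intro b' hge hz hne
          have hanot : a ≠ AS.hd := hge.ne_hd' hne
          obtain ⟨hr1, hr2, _⟩ := hp.2 (not_isColl_ne_hd hanot) hz
          exact ⟨hr1, hge.ne_tb hr2⟩
        have hres : ∃ b, Reach H' r Z x y F b ∧
            (F ∈ Z → b ≠ AS.hd → (r = SepRule.s ∧ b ≠ AS.tb)) := by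
          rcases ih.1 rfl with ihl | ⟨a', hge, hra⟩
          · exact ⟨AS.hd, ihl, fun _ h => absurd rfl h⟩
          · exact ⟨a', hra, fun hz hne => hcond hge hz hne⟩
        obtain ⟨b, hbF, hbc⟩ := hres
        have hd1 := hopFS hbF hbc
        have htb := hopFStb he' hbF hbc
        exact simD_S_all hFS hd1 (Or.inl htb) _
      · have he' : eRel H' v EKind.bwd w :=
          hE' he (fun h => nomatch h.1) (fun h => hcSF ⟨h.2.1, h.2.2⟩)
        by_cases hwF : w = F
        · have hwf := hwF.symm; subst hwf
          have hvF : v ≠ F := fun h => G.D_irrefl F (by rw [h] at he; exact he.1)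
          have hvS : v ≠ S := fun h => hcSF ⟨h, rfl⟩
          obtain ⟨a', hge, hra⟩ := ih.2.2 hvF hvS
          have hb := Reach.step (K := H') _ _ hra he'
            (pass_transfer₂ hge hasetsub (fun hf => nomatch hf) hp)
          have hlabv : v ∈ H.scc F ↔ v ∈ H'.scc F :=
            hlab v F (fun hh => hvF hh.1) (fun hh => hvS hh.1)
          refine simD_F hFS (Or.inr ⟨arrS H' v EKind.bwd F, ?_, hb⟩)
          rw [arrS_congr EKind.bwd hlabv.symm]
          exact ASge.refl _
        by_cases hwS : w = S
        · have hws := hwS.symm; subst hws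
          have hvS : v ≠ S := fun h => G.D_irrefl S (by rw [h] at he; exact he.1)
          have hvF : v ≠ F := fun h => hcFS2 ⟨h, rfl⟩
          have hnm : v ∉ H.scc S := fun hm => hvS (hsccS_eq v hvF hm)
          rw [arrS_bwd_tb hnm]
          obtain ⟨a', hge, hra⟩ := ih.2.2 hvF hvS
          have hb := Reach.step (K := H') _ _ hra he'
            (pass_transfer₂ hge hasetsub (fun hf => nomatch hf) hp)
          have hnm' : v ∉ H'.scc S := fun hm => hnm (scc_mono hDsub hm)
          rw [arrS_bwd_tb hnm'] at hb
          exact simD_S_tb hFS (Or.inr hb)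
        · -- w ∉ {F, S}
          by_cases hvF : v = F
          · have hvf := hvF.symm; subst hvf
            have hpnew : ∀ b', (F ∈ Z → ¬ isColl b' EKind.bwd → (r = SepRule.s ∧ b' ≠ AS.tb)) →
                pass H' r Z x y b' F EKind.bwd w := by
              intro b' hcnd
              refine ⟨fun _ => hFaset, fun hnc hz => ?_⟩
              obtain ⟨hr1, hr2⟩ := hcnd hz hnc
              exact ⟨hr1, hr2, fun hbad => nomatch hbad⟩
            have hlabv : F ∈ H.scc w ↔ F ∈ H'.scc w :=
              hlab F w (fun hh => hwS hh.2) (fun hh => hFS hh.1)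
            rcases ih.1 rfl with ihl | ⟨a', hge, hra⟩
            · have hb := Reach.step (K := H') _ _ ihl he'
                (hpnew AS.hd (fun _ hnc => absurd isColl_hd_bwd hnc))
              refine simD_O hwF hwS ⟨arrS H' F EKind.bwd w, ?_, hb⟩
              rw [arrS_congr EKind.bwd hlabv.symm]
              exact ASge.refl _
            · have hb := Reach.step (K := H') _ _ hra he'
                (hpnew a' (fun hz hnc => by
                  have hanot : a ≠ AS.hd := hge.ne_hd' (fun h => hnc ⟨h, Or.inl rfl⟩)
                  obtain ⟨hr1, hr2, _⟩ := hp.2 (not_isColl_ne_hd hanot) hz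
                  exact ⟨hr1, hge.ne_tb hr2⟩))
              refine simD_O hwF hwS ⟨arrS H' F EKind.bwd w, ?_, hb⟩
              rw [arrS_congr EKind.bwd hlabv.symm]
              exact ASge.refl _
          by_cases hvS : v = S
          · have hvs := hvS.symm; subst hvs
            -- he : H.D w S ; target state is tb on both sides
            have hnm : S ∉ H.scc w := by
              intro hm
              exact hwS (hsccS_eq w hwF ⟨hm.2, hm.1⟩)
            rw [arrS_bwd_tb hnm]
            have hb : Reach H' r Z x y w (arrS H' S EKind.bwd w) := by
              cases a with
              | hd =>
                have hS' := haset (hp.1 isColl_hd_bwd)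
                exact Reach.step (K := H') _ _ ((ih.2.1 rfl).1 rfl) he'
                  (pass_coll isColl_hd_bwd hS')
              | tg =>
                obtain ⟨hd1, hd2⟩ := (ih.2.1 rfl).2.1 rfl
                by_cases hz : S ∈ Z
                · exact Reach.step (K := H') _ _ hd1 he'
                    (pass_coll isColl_hd_bwd (mem_aset_Z hz))
                · rcases hd2 with htb | hz'
                  · exact Reach.step (K := H') _ _ htb he'
                      (pass_of_notZ hz (not_isColl_ne_hd (fun h => AS.noConfusion h)))
                  · exact absurd hz' hz
              | tb =>
                have hz : S ∉ Z := fun hz =>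
                  (hp.2 (not_isColl_ne_hd (fun h => AS.noConfusion h)) hz).2.1 rfl
                rcases (ih.2.1 rfl).2.2 rfl with h | htb
                · exact absurd h hz
                · exact Reach.step (K := H') _ _ htb he'
                    (pass_of_notZ hz (not_isColl_ne_hd (fun h => AS.noConfusion h)))
            exact simD_O hwF hwS ⟨arrS H' S EKind.bwd w, arrS_bwd_ge_tb, hb⟩
          · obtain ⟨a', hge, hra⟩ := ih.2.2 hvF hvS
            have hb := Reach.step (K := H') _ _ hra he'
              (pass_transfer₂ hge hasetsub (fun hf => nomatch hf) hp)
            have hlabv : v ∈ H.scc w ↔ v ∈ H'.scc w :=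
              hlab v w (fun hh => hvF hh.1) (fun hh => hvS hh.1)
            refine simD_O hwF hwS ⟨arrS H' v EKind.bwd w, ?_, hb⟩
            rw [arrS_congr EKind.bwd hlabv.symm]
            exact ASge.refl _
    | bi =>
      have he' : eRel H' v EKind.bi w := he
      have hb : Reach H' r Z x y w AS.hd := by
        by_cases hvF : v = F
        · have hvf := hvF.symm; subst hvf
          rcases ih.1 rfl with ihl | ⟨a', hge, hra⟩
          · exact (Reach.step (K := H') _ _ ihl he' (pass_coll isColl_hd_bi hFaset) : _)
          · by_cases ha' : a' = AS.hd
            · exact (Reach.step (K := H') _ _ (ha' ▸ hra) he'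
                (pass_coll isColl_hd_bi hFaset) : _)
            · refine Reach.step (K := H') _ _ hra he'
                ⟨fun hcl => absurd hcl.1 ha', fun _ hz => ?_⟩
              have hanot : a ≠ AS.hd := hge.ne_hd' ha'
              obtain ⟨hr1, hr2, _⟩ := hp.2 (not_isColl_ne_hd hanot) hz
              exact ⟨hr1, hge.ne_tb hr2, fun hbad => nomatch hbad⟩
        by_cases hvS : v = S
        · have hvs := hvS.symm; subst hvs
          cases a with
          | hd =>
            have hS' := haset (hp.1 isColl_hd_bi)
            exact (Reach.step (K := H') _ _ ((ih.2.1 rfl).1 rfl) he'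
              (pass_coll isColl_hd_bi hS') : _)
          | tg =>
            obtain ⟨hd1, hd2⟩ := (ih.2.1 rfl).2.1 rfl
            by_cases hz : S ∈ Z
            · exact (Reach.step (K := H') _ _ hd1 he'
                (pass_coll isColl_hd_bi (mem_aset_Z hz)) : _)
            · rcases hd2 with htb | hz'
              · exact (Reach.step (K := H') _ _ htb he'
                  (pass_of_notZ hz (not_isColl_ne_hd (fun h => AS.noConfusion h))) : _)
              · exact absurd hz' hz
          | tb =>
            have hz : S ∉ Z := fun hz =>
              (hp.2 (not_isColl_ne_hd (fun h => AS.noConfusion h)) hz).2.1 rfl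
            rcases (ih.2.1 rfl).2.2 rfl with h | htb
            · exact absurd h hz
            · exact (Reach.step (K := H') _ _ htb he'
                (pass_of_notZ hz (not_isColl_ne_hd (fun h => AS.noConfusion h))) : _)
        · obtain ⟨a', hge, hra⟩ := ih.2.2 hvF hvS
          exact (Reach.step (K := H') _ _ hra he'
            (pass_transfer₂ hge hasetsub (fun hf => nomatch hf) hp) : _)
      by_cases hwF : w = F
      · rw [hwF]; exact simD_F hFS (Or.inl (hwF ▸ hb))
      by_cases hwS : w = S
      · rw [hwS]; exact simD_S_hd hFS (hwS ▸ hb)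
      · exact simD_O hwF hwS ⟨AS.hd, Or.inl rfl, hb⟩

end confD

end MERD
theorem markov_equiv_remove_directed' {V : Type u} (G : DMG V) (r : SepRule)
    (S F : V)
    (hPa : G.pa S = G.ancSet {S} \ {S})
    (hSB : ∀ P ∈ G.pa S, G.B S P)
    (hF : ∀ X : V, X ≠ F → G.D F X ∧ G.B F X)
    (𝓘 : Set (Set V))
    (h𝓘 : ¬ ∃ I ∈ 𝓘, S ∉ I ∧ G.pa S ⊆ I) :
    IMEquiv G (G.removeDir F S) r 𝓘 := by
  classical
  intro I hI
  by_cases hSI : S ∈ I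
  · have hEq : G.intervene I = (G.removeDir F S).intervene I := by
      apply MERD.DMG_ext
      · funext a b
        apply propext
        constructor
        · rintro ⟨hd, hb⟩
          exact ⟨⟨hd, fun hc => hb (by rw [hc.2]; exact hSI)⟩, hb⟩
        · rintro ⟨⟨hd, _⟩, hb⟩
          exact ⟨hd, hb⟩
      · rfl
    rw [hEq]
  by_cases hFS : F = S
  · have hEq : G.removeDir F S = G := by
      apply MERD.DMG_ext
      · funext a b
        apply propext
        constructor
        · rintro ⟨hd, _⟩; exact hd
        · intro hd
          refine ⟨hd, ?_⟩
          rintro ⟨rfl, rfl⟩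
          rw [hFS] at hd
          exact G.D_irrefl _ hd
      · rfl
    rw [hEq]
  -- main case
  have hSF : S ≠ F := fun h => hFS h.symm
  have hDFS : G.D F S := (hF S hSF).1
  have hPa' : ∀ v, G.anc v S → v = S ∨ G.D v S := by
    intro v hv
    by_cases hvS : v = S
    · exact Or.inl hvS
    · right
      have hmem : v ∈ G.ancSet {S} \ {S} := ⟨⟨S, rfl, hv⟩, hvS⟩
      rw [← hPa] at hmem
      exact hmem
  have hnot : ¬ (S ∉ I ∧ G.pa S ⊆ I) := fun hcon => h𝓘 ⟨I, hI, hcon⟩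
  have hPex : ∃ P, G.D P S ∧ P ∉ I := by
    by_contra hno
    push_neg at hno
    exact hnot ⟨hSI, fun q hq => hno q hq⟩
  -- edge inclusions
  have hD' : ∀ u v, ((G.removeDir F S).intervene I).D u v → (G.intervene I).D u v := by
    rintro u v ⟨⟨h1, _⟩, h2⟩; exact ⟨h1, h2⟩
  have hB' : ∀ u v, ((G.removeDir F S).intervene I).B u v → (G.intervene I).B u v := by
    rintro u v h; exact h
  have key : ∀ (a b : V) (W : Set V), a ≠ b → a ∉ W → b ∉ W →
      (rSep (G.intervene I) r W a b ↔ rSep ((G.removeDir F S).intervene I) r W a b) := by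
    intro a b W hab haW hbW
    have h1 : ∀ (K : DMG V), rSep K r W a b ↔ ¬ MERD.conn K r W a b := by
      intro K
      rw [MERD.conn_iff_not_rSep, not_not]
    rw [h1, h1]
    apply not_congr
    constructor
    · -- the hard direction
      intro hc
      by_cases hB1 : ∃ P, G.D P S ∧ P ∉ I ∧ P ≠ F
      · obtain ⟨P, hp1, hp2, hp3⟩ := hB1
        exact MERD.connB1 hSI hp1 hp2 hp3 (hF P hp3).1 (hSB P hp1) hc
      · have hFI : F ∉ I := by
          obtain ⟨P, hp1, hp2⟩ := hPex
          by_cases hPF : P = F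
          · rw [← hPF]; exact hp2
          · exact absurd ⟨P, hp1, hp2, hPF⟩ hB1
        have hPaI : ∀ Q, G.D Q S → Q ≠ F → Q ∈ I := by
          intro Q hq hqf
          by_contra hn
          exact hB1 ⟨Q, hq, hn, hqf⟩
        have hBSF : G.B S F := hSB F hDFS
        by_cases hCD : ∃ T ∈ W ∪ {a, b}, T ∉ I ∧ T ≠ S
        · exact MERD.connD' hSI hFI hFS hDFS hPa' hPaI hBSF (fun X hX => (hF X hX).1)
            hbW hCD hc
        · have hCC : ∀ T ∈ W ∪ {a, b}, T ∈ I ∨ T = S := by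
            intro T hT
            by_contra hn
            push_neg at hn
            exact hCD ⟨T, hT, hn.1, hn.2⟩
          exact (MERD.connC' hSI hFI hFS hDFS hPa' hPaI hab hCC).mp hc
    · exact MERD.conn_mono hD' hB'
  apply Set.ext
  rintro ⟨a, b, W⟩
  simp only [IM, Set.mem_setOf_eq]
  constructor
  · rintro ⟨h1, h2, h3, h4⟩
    exact ⟨h1, h2, h3, (key a b W h1 h2 h3).mp h4⟩
  · rintro ⟨h1, h2, h3, h4⟩
    exact ⟨h1, h2, h3, (key a b W h1 h2 h3).mpr h4⟩
/-- removing the edge `(F, S)` yields an `𝓘`-`r`-Markov equivalent DMG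
whenever no experiment in `𝓘` intervenes on all parents of `S` while leaving `S` alone. -/
theorem markov_equiv_remove_directed {V : Type u} [Fintype V] (G : DMG V) (r : SepRule)
    (S F : V)
    (hPa : G.pa S = G.ancSet {S} \ {S})
    (hSB : ∀ P ∈ G.pa S, G.B S P)
    (hF : ∀ X : V, X ≠ F → G.D F X ∧ G.B F X)
    (𝓘 : Set (Set V))
    (h𝓘 : ¬ ∃ I ∈ 𝓘, S ∉ I ∧ G.pa S ⊆ I) :
    IMEquiv G (G.removeDir F S) r 𝓘 :=
  markov_equiv_remove_directed' G r S F hPa hSB hF 𝓘 h𝓘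
end

section
/- Let V be a finite set with |V| = n ≥ 2, let r ∈ {d, σ}, and let c be an integer with 1 ≤ c ≤ n − 1. Then there exists a DMG G = (V, D, B) with cc(G^{uc}) = c such that for every collection 𝓘 of subsets of V with |𝓘| < c, there exists a DMG G' over V that is 𝓘-r-Markov equivalent to G and satisfies RA(G') ≠ RA(G). -/
universe u

/-! ### Auxiliary machinery for the lower bound construction -/

section AuxMachinery

variable {V : Type u}

theorem DMG.anc_congr {G₁ G₂ : DMG V} (h : G₁.D = G₂.D) : G₁.anc = G₂.anc := by
  unfold DMG.anc; rw [h]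

theorem DMG.ancSet_congr {G₁ G₂ : DMG V} (h : G₁.D = G₂.D) : G₁.ancSet = G₂.ancSet := by
  unfold DMG.ancSet; rw [DMG.anc_congr h]

theorem DMG.scc_congr {G₁ G₂ : DMG V} (h : G₁.D = G₂.D) : G₁.scc = G₂.scc := by
  unfold DMG.scc; rw [DMG.anc_congr h]

theorem MPath.blocked_congr {G₁ G₂ : DMG V} (h : G₁.D = G₂.D) (p : MPath V)
    (r : SepRule) (S : Set V) (x y : V) :
    p.blocked G₁ r S x y ↔ p.blocked G₂ r S x y := by
  unfold MPath.blocked; rw [DMG.ancSet_congr h, DMG.scc_congr h]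

theorem IM_congr {G₁ G₂ : DMG V} (hD : G₁.D = G₂.D) (hB : ∀ a b, G₁.B a b ↔ G₂.B a b)
    (r : SepRule) : IM G₁ r = IM G₂ r := by
  have hval : ∀ p : MPath V, p.valid G₁ ↔ p.valid G₂ := by
    intro p
    unfold MPath.valid
    refine forall_congr' fun i => imp_congr_right fun _ => ?_
    rw [hD]
    exact and_congr Iff.rfl (and_congr Iff.rfl (imp_congr_right fun _ => hB _ _))
  ext ⟨a, b, T⟩
  simp only [IM, Set.mem_setOf_eq]
  constructor <;> rintro ⟨h1, h2, h3, h4⟩ <;> refine ⟨h1, h2, h3, fun p hp h0 hk => ?_⟩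
  · exact (MPath.blocked_congr hD p r T a b).1 (h4 p ((hval p).2 hp) h0 hk)
  · exact (MPath.blocked_congr hD p r T a b).2 (h4 p ((hval p).1 hp) h0 hk)

/-- the body of `MPath.blocked` at a single position -/
def blockedAt (G : DMG V) (r : SepRule) (S : Set V) (x y : V) (p : MPath V) (i : ℕ) : Prop :=
  (p.collider i ∧ p.Z i ∉ G.ancSet (S ∪ {x, y})) ∨
    (¬ p.collider i ∧ p.Z i ∈ S ∧
      (r = SepRule.d ∨
       (p.E i = EKind.fwd ∧ p.Z (i+1) ∉ G.scc (p.Z i)) ∨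
       (p.E (i-1) = EKind.bwd ∧ p.Z (i-1) ∉ G.scc (p.Z i))))

theorem MPath.blocked_iff_at (p : MPath V) (G : DMG V) (r : SepRule) (S : Set V) (x y : V) :
    p.blocked G r S x y ↔ ∃ i, 1 ≤ i ∧ i < p.k ∧ blockedAt G r S x y p i := Iff.rfl

theorem blockedAt_congr {G : DMG V} {r : SepRule} {S : Set V} {x y : V} {p q : MPath V}
    {i j : ℕ}
    (hE0 : q.E (i-1) = p.E (j-1)) (hE1 : q.E i = p.E j)
    (hZ0 : q.Z (i-1) = p.Z (j-1)) (hZ1 : q.Z i = p.Z j) (hZ2 : q.Z (i+1) = p.Z (j+1)) :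
    blockedAt G r S x y q i ↔ blockedAt G r S x y p j := by
  unfold blockedAt MPath.collider
  rw [hE0, hE1, hZ0, hZ1, hZ2]

/-- insert one intermediate vertex `m` in place of step `t`, producing two steps -/
def insert2 (p : MPath V) (t : ℕ) (m : V) (e1 e2 : EKind) : MPath V where
  k := p.k + 1
  Z s := if s ≤ t then p.Z s else if s = t + 1 then m else p.Z (s - 1)
  E s := if s < t then p.E s else if s = t then e1 else if s = t + 1 then e2 else p.E (s - 1)
  hk := Nat.le_succ_of_le p.hk

section insert2facts
variable {p : MPath V} {t s : ℕ} {m : V} {e1 e2 : EKind}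

theorem insert2_k : (insert2 p t m e1 e2).k = p.k + 1 := rfl

theorem insert2_Z_le (h : s ≤ t) : (insert2 p t m e1 e2).Z s = p.Z s := if_pos h

theorem insert2_Z_mid : (insert2 p t m e1 e2).Z (t+1) = m := by
  show (if t+1 ≤ t then _ else if t+1 = t+1 then m else _) = m
  rw [if_neg (by omega), if_pos rfl]

theorem insert2_Z_ge (h : t + 2 ≤ s) : (insert2 p t m e1 e2).Z s = p.Z (s-1) := by
  show (if s ≤ t then _ else if s = t+1 then _ else p.Z (s-1)) = _
  rw [if_neg (by omega), if_neg (by omega)]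

theorem insert2_E_lt (h : s < t) : (insert2 p t m e1 e2).E s = p.E s := if_pos h

theorem insert2_E_t : (insert2 p t m e1 e2).E t = e1 := by
  show (if t < t then _ else if t = t then e1 else _) = _
  rw [if_neg (lt_irrefl t), if_pos rfl]

theorem insert2_E_t1 : (insert2 p t m e1 e2).E (t+1) = e2 := by
  show (if t+1 < t then _ else if t+1 = t then _ else if t+1 = t+1 then e2 else _) = _
  rw [if_neg (by omega), if_neg (by omega), if_pos rfl]

theorem insert2_E_ge (h : t + 2 ≤ s) : (insert2 p t m e1 e2).E s = p.E (s-1) := by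
  show (if s < t then _ else if s = t then _ else if s = t+1 then _ else p.E (s-1)) = _
  rw [if_neg (by omega), if_neg (by omega), if_neg (by omega)]

theorem insert2_valid {G : DMG V} (hv : p.valid G) (ht : t < p.k)
    (h1f : e1 = EKind.fwd → G.D (p.Z t) m) (h1b : e1 = EKind.bwd → G.D m (p.Z t))
    (h1i : e1 = EKind.bi → G.B (p.Z t) m)
    (h2f : e2 = EKind.fwd → G.D m (p.Z (t+1))) (h2b : e2 = EKind.bwd → G.D (p.Z (t+1)) m)
    (h2i : e2 = EKind.bi → G.B m (p.Z (t+1))) :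
    (insert2 p t m e1 e2).valid G := by
  intro s hs
  rw [insert2_k] at hs
  have hcase : s < t ∨ s = t ∨ s = t + 1 ∨ t + 2 ≤ s := by omega
  rcases hcase with h | h | h | h
  · rw [insert2_E_lt h, insert2_Z_le (by omega : s ≤ t), insert2_Z_le (by omega : s+1 ≤ t)]
    exact hv s (by omega)
  · subst h
    rw [insert2_E_t, insert2_Z_le (le_refl s), insert2_Z_mid]
    exact ⟨h1f, h1b, h1i⟩
  · subst h
    rw [insert2_E_t1, insert2_Z_mid, insert2_Z_ge (by omega : t + 2 ≤ t + 1 + 1)]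
    exact ⟨h2f, h2b, h2i⟩
  · rw [insert2_E_ge h, insert2_Z_ge h, insert2_Z_ge (by omega : t + 2 ≤ s + 1)]
    have he : s + 1 - 1 = (s - 1) + 1 := by omega
    rw [he]
    exact hv (s-1) (by omega)

theorem insert2_notBlocked {G : DMG V} {r : SepRule} {S : Set V} {x y : V}
    (hnb : ¬ p.blocked G r S x y) (ht : t < p.k)
    (hT : 1 ≤ t → ¬ blockedAt G r S x y (insert2 p t m e1 e2) t)
    (hT1 : ¬ blockedAt G r S x y (insert2 p t m e1 e2) (t+1))
    (hT2 : t + 1 < p.k → ¬ blockedAt G r S x y (insert2 p t m e1 e2) (t+2)) :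
    ¬ (insert2 p t m e1 e2).blocked G r S x y := by
  rintro ⟨s, hs1, hs2, hb⟩
  rw [insert2_k] at hs2
  have hcase : s < t ∨ s = t ∨ s = t + 1 ∨ s = t + 2 ∨ t + 3 ≤ s := by omega
  rcases hcase with h | h | h | h | h
  · refine hnb ⟨s, hs1, by omega, ?_⟩
    exact (blockedAt_congr (insert2_E_lt (by omega)) (insert2_E_lt h)
      (insert2_Z_le (by omega)) (insert2_Z_le (by omega)) (insert2_Z_le (by omega))).1 hb
  · subst h; exact hT hs1 hb
  · subst h; exact hT1 hb
  · subst h; exact hT2 (by omega) hb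
  · refine hnb ⟨s - 1, by omega, by omega, ?_⟩
    have e1' : s - 1 - 1 = s - 2 := by omega
    have e2' : (s - 1) + 1 = s := by omega
    refine (blockedAt_congr (i := s) (j := s - 1) ?_ ?_ ?_ ?_ ?_).1 hb
    · rw [insert2_E_ge (by omega : t + 2 ≤ s - 1)]
    · rw [insert2_E_ge (by omega : t + 2 ≤ s)]
    · rw [insert2_Z_ge (by omega : t + 2 ≤ s - 1)]
    · rw [insert2_Z_ge (by omega : t + 2 ≤ s)]
    · rw [insert2_Z_ge (by omega : t + 2 ≤ s + 1)]
      congr 1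
      omega

end insert2facts

end AuxMachinery
section AuxMachinery2

variable {V : Type u}

/-- substitute the vertex at position `w` -/
def substV (p : MPath V) (w : ℕ) (m : V) : MPath V :=
  ⟨p.k, fun s => if s = w then m else p.Z s, p.E, p.hk⟩

section substVfacts
variable {p : MPath V} {w s : ℕ} {m : V}

theorem substV_k : (substV p w m).k = p.k := rfl
theorem substV_E : (substV p w m).E s = p.E s := rfl
theorem substV_Z_eq : (substV p w m).Z w = m := if_pos rfl
theorem substV_Z_ne (h : s ≠ w) : (substV p w m).Z s = p.Z s := if_neg h

theorem substV_collider (i : ℕ) : (substV p w m).collider i ↔ p.collider i := Iff.rfl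

theorem substV_valid {G : DMG V} (hv : p.valid G) (hw1 : 1 ≤ w) (hw2 : w < p.k)
    (h1f : p.E (w-1) = EKind.fwd → G.D (p.Z (w-1)) m)
    (h1b : p.E (w-1) = EKind.bwd → G.D m (p.Z (w-1)))
    (h1i : p.E (w-1) = EKind.bi → G.B (p.Z (w-1)) m)
    (h2f : p.E w = EKind.fwd → G.D m (p.Z (w+1)))
    (h2b : p.E w = EKind.bwd → G.D (p.Z (w+1)) m)
    (h2i : p.E w = EKind.bi → G.B m (p.Z (w+1))) :
    (substV p w m).valid G := by
  intro s hs
  rw [substV_k] at hs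
  rw [substV_E]
  by_cases hsw : s = w
  · subst hsw
    rw [substV_Z_eq, substV_Z_ne (by omega : s + 1 ≠ s)]
    exact ⟨h2f, h2b, h2i⟩
  by_cases hsw1 : s + 1 = w
  · have hsval : s = w - 1 := by omega
    rw [substV_Z_ne hsw, hsw1, substV_Z_eq]
    subst hsval
    exact ⟨h1f, h1b, h1i⟩
  · rw [substV_Z_ne hsw, substV_Z_ne hsw1]
    exact hv s hs

theorem substV_notBlocked {G : DMG V} {r : SepRule} {S : Set V} {x y : V}
    (hr : r = SepRule.d) (hnb : ¬ p.blocked G r S x y)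
    (hw : ¬ blockedAt G r S x y (substV p w m) w) :
    ¬ (substV p w m).blocked G r S x y := by
  rintro ⟨s, hs1, hs2, hb⟩
  rw [substV_k] at hs2
  by_cases hsw : s = w
  · subst hsw; exact hw hb
  · refine hnb ⟨s, hs1, hs2, ?_⟩
    rcases hb with ⟨hc, hz⟩ | ⟨hc, hz, _⟩
    · exact Or.inl ⟨hc, by rwa [substV_Z_ne hsw] at hz⟩
    · exact Or.inr ⟨hc, by rwa [substV_Z_ne hsw] at hz, Or.inl hr⟩

end substVfacts

/-- a step that uses the bidirected edge `{v0, vi}` -/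
def IsBadStep (v0 vi : V) (p : MPath V) (t : ℕ) : Prop :=
  p.E t = EKind.bi ∧ ((p.Z t = v0 ∧ p.Z (t+1) = vi) ∨ (p.Z t = vi ∧ p.Z (t+1) = v0))

def badSet (v0 vi : V) (p : MPath V) : Set ℕ := {t | t < p.k ∧ IsBadStep v0 vi p t}

theorem badSet_finite (v0 vi : V) (p : MPath V) : (badSet v0 vi p).Finite :=
  (Set.finite_Iio p.k).subset fun _ ht => ht.1

theorem badSet_substV_lt {v0 vi m : V} {p : MPath V} {w : ℕ}
    (hm0 : m ≠ v0) (hmi : m ≠ vi) (τ : ℕ) (hτ : τ ∈ badSet v0 vi p)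
    (hτw : τ = w ∨ τ + 1 = w) :
    (badSet v0 vi (substV p w m)).ncard < (badSet v0 vi p).ncard := by
  refine Set.ncard_lt_ncard ⟨?_, ?_⟩ (badSet_finite v0 vi p)
  · rintro s ⟨hs, hE, hor⟩
    have hsw : s ≠ w := by
      rintro rfl
      rw [substV_Z_eq] at hor
      rcases hor with ⟨h1, _⟩ | ⟨h1, _⟩
      · exact hm0 h1
      · exact hmi h1
    have hsw1 : s + 1 ≠ w := by
      rintro h
      rw [h, substV_Z_eq] at hor
      rcases hor with ⟨_, h2⟩ | ⟨_, h2⟩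
      · exact hmi h2
      · exact hm0 h2
    rw [substV_Z_ne hsw, substV_Z_ne hsw1] at hor
    exact ⟨by rwa [substV_k] at hs, hE, hor⟩
  · intro hsub
    have hτ' := hsub hτ
    obtain ⟨_, _, hor⟩ := hτ'
    rcases hτw with h | h
    · subst h
      rw [substV_Z_eq] at hor
      rcases hor with ⟨h1, _⟩ | ⟨h1, _⟩
      · exact hm0 h1
      · exact hmi h1
    · rw [h, substV_Z_eq] at hor
      rcases hor with ⟨_, h2⟩ | ⟨_, h2⟩
      · exact hmi h2
      · exact hm0 h2

theorem badSet_insert2_lt {v0 vi m : V} {p : MPath V} {t : ℕ} {e1 e2 : EKind}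
    (ht : t < p.k) (hbad : IsBadStep v0 vi p t)
    (hT : ¬ IsBadStep v0 vi (insert2 p t m e1 e2) t)
    (hT1 : ¬ IsBadStep v0 vi (insert2 p t m e1 e2) (t+1)) :
    (badSet v0 vi (insert2 p t m e1 e2)).ncard < (badSet v0 vi p).ncard := by
  have hmem : t ∈ badSet v0 vi p := ⟨ht, hbad⟩
  have hle : (badSet v0 vi (insert2 p t m e1 e2)).ncard ≤ (badSet v0 vi p \ {t}).ncard := by
    refine Set.ncard_le_ncard_of_injOn (fun s => if s < t then s else s - 1) ?_ ?_
      ((badSet_finite v0 vi p).diff)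
    · rintro s ⟨hs, hbs⟩
      rw [insert2_k] at hs
      have hst : s ≠ t := fun h => hT (h ▸ hbs)
      have hst1 : s ≠ t + 1 := fun h => hT1 (h ▸ hbs)
      by_cases h : s < t
      · rw [if_pos h]
        obtain ⟨hE, hor⟩ := hbs
        rw [insert2_E_lt h] at hE
        rw [insert2_Z_le (by omega : s ≤ t), insert2_Z_le (by omega : s + 1 ≤ t)] at hor
        exact ⟨⟨by omega, hE, hor⟩, by simp; omega⟩
      · rw [if_neg h]
        have hs2 : t + 2 ≤ s := by omega
        obtain ⟨hE, hor⟩ := hbs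
        rw [insert2_E_ge hs2] at hE
        rw [insert2_Z_ge hs2, insert2_Z_ge (by omega : t + 2 ≤ s + 1)] at hor
        have hidx : s + 1 - 1 = (s - 1) + 1 := by omega
        rw [hidx] at hor
        exact ⟨⟨by omega, hE, hor⟩, by simp; omega⟩
    · rintro s ⟨hs, hbs⟩ s' ⟨hs', hbs'⟩ heq
      have hst : s ≠ t := fun h => hT (h ▸ hbs)
      have hst1 : s ≠ t + 1 := fun h => hT1 (h ▸ hbs)
      have hst' : s' ≠ t := fun h => hT (h ▸ hbs')
      have hst1' : s' ≠ t + 1 := fun h => hT1 (h ▸ hbs')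
      simp only at heq
      split_ifs at heq <;> omega
  calc (badSet v0 vi (insert2 p t m e1 e2)).ncard ≤ (badSet v0 vi p \ {t}).ncard := hle
    _ < (badSet v0 vi p).ncard :=
        Set.ncard_diff_singleton_lt_of_mem hmem (badSet_finite v0 vi p)

end AuxMachinery2
section AuxMachinery3

variable {V : Type u}

theorem transfer_t {G : DMG V} {r : SepRule} {S : Set V} {x y : V} {p : MPath V}
    {t : ℕ} {m : V} {e1 e2 : EKind} (ht1 : 1 ≤ t)
    (hhf : MPath.headAtFst e1 ↔ MPath.headAtFst (p.E t))
    (hne1 : e1 ≠ EKind.fwd)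
    (hb : blockedAt G r S x y (insert2 p t m e1 e2) t) : blockedAt G r S x y p t := by
  have hE0 : (insert2 p t m e1 e2).E (t-1) = p.E (t-1) := insert2_E_lt (by omega)
  have hZ0 : (insert2 p t m e1 e2).Z (t-1) = p.Z (t-1) := insert2_Z_le (by omega)
  have hZ1 : (insert2 p t m e1 e2).Z t = p.Z t := insert2_Z_le (le_refl t)
  have hcol : (insert2 p t m e1 e2).collider t ↔ p.collider t := by
    unfold MPath.collider
    rw [hE0, insert2_E_t]
    exact and_congr Iff.rfl hhf
  rcases hb with ⟨hc, hz⟩ | ⟨hc, hz, hcond⟩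
  · exact Or.inl ⟨hcol.1 hc, by rwa [hZ1] at hz⟩
  · refine Or.inr ⟨fun h => hc (hcol.2 h), by rwa [hZ1] at hz, ?_⟩
    rcases hcond with h | ⟨hf, _⟩ | ⟨hbw, hsc⟩
    · exact Or.inl h
    · rw [insert2_E_t] at hf
      exact absurd hf hne1
    · rw [hE0] at hbw
      rw [hZ0, hZ1] at hsc
      exact Or.inr (Or.inr ⟨hbw, hsc⟩)

theorem transfer_t2 {G : DMG V} {r : SepRule} {S : Set V} {x y : V} {p : MPath V}
    {t : ℕ} {m : V} {e1 e2 : EKind}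
    (hhs : MPath.headAtSnd e2 ↔ MPath.headAtSnd (p.E t))
    (hne2 : e2 ≠ EKind.bwd)
    (hb : blockedAt G r S x y (insert2 p t m e1 e2) (t+2)) : blockedAt G r S x y p (t+1) := by
  have ha : t + 2 - 1 = t + 1 := rfl
  have hb1 : t + 1 - 1 = t := rfl
  have hE0 : (insert2 p t m e1 e2).E (t+2-1) = e2 := by rw [ha]; exact insert2_E_t1
  have hE1 : (insert2 p t m e1 e2).E (t+2) = p.E (t+1) := by
    rw [insert2_E_ge (by omega), ha]
  have hZ1 : (insert2 p t m e1 e2).Z (t+2) = p.Z (t+1) := by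
    rw [insert2_Z_ge (by omega), ha]
  have hZ2 : (insert2 p t m e1 e2).Z (t+3) = p.Z (t+2) := by
    rw [insert2_Z_ge (by omega), show t+3-1 = t+2 from rfl]
  have hcol : (insert2 p t m e1 e2).collider (t+2) ↔ p.collider (t+1) := by
    unfold MPath.collider
    rw [hE0, hE1, hb1]
    exact and_congr hhs Iff.rfl
  rcases hb with ⟨hc, hz⟩ | ⟨hc, hz, hcond⟩
  · exact Or.inl ⟨hcol.1 hc, by rwa [hZ1] at hz⟩
  · refine Or.inr ⟨fun h => hc (hcol.2 h), by rwa [hZ1] at hz, ?_⟩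
    rcases hcond with h | ⟨hf, hsc⟩ | ⟨hbw, _⟩
    · exact Or.inl h
    · rw [hE1] at hf
      rw [hZ2, hZ1] at hsc
      exact Or.inr (Or.inl ⟨hf, hsc⟩)
    · rw [hE0] at hbw
      exact absurd hbw hne2

/-- hypotheses on the ambient graph needed for the path surgery -/
structure SurgeryCtx (H : DMG V) (v0 vi vj : V) : Prop where
  hij : vi ≠ vj
  h0i : v0 ≠ vi
  h0j : v0 ≠ vj
  hBj : H.B v0 vj
  hDij : H.D vi vj
  hDji : H.D vj vi
  hDv0 : ∀ u, H.D u vi → u ≠ v0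
  hDsub : ∀ u, H.D u vi → u ≠ vj → H.D u vj
  hBonly : ∀ z, H.B vi z → z = v0
  hBonly' : ∀ z, H.B z vi → z = v0

end AuxMachinery3
section SurgeryStep

variable {V : Type u}

theorem surgery_stepA {H : DMG V} {v0 vi vj : V} (C : SurgeryCtx H v0 vi vj)
    (r : SepRule) {S : Set V} {x y : V} (hxS : x ∉ S) (hyS : y ∉ S)
    (p : MPath V) (hv : p.valid H) (h0 : p.Z 0 = x) (hkk : p.Z p.k = y)
    (hnb : ¬ p.blocked H r S x y) (t : ℕ) (ht : t < p.k)
    (hEbi : p.E t = EKind.bi) (hZt : p.Z t = v0) (hZt1 : p.Z (t+1) = vi) :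
    ∃ q : MPath V, q.valid H ∧ q.Z 0 = x ∧ q.Z q.k = y ∧ ¬ q.blocked H r S x y ∧
      (badSet v0 vi q).ncard < (badSet v0 vi p).ncard := by
  have hbadt : IsBadStep v0 vi p t := ⟨hEbi, Or.inl ⟨hZt, hZt1⟩⟩
  have hanc : ∀ z ∈ S, z ∈ H.ancSet (S ∪ {x, y}) :=
    fun z hz => ⟨z, Or.inl hz, Relation.ReflTransGen.refl⟩
  have hsccji : vi ∈ H.scc vj :=
    ⟨Relation.ReflTransGen.single C.hDji, Relation.ReflTransGen.single C.hDij⟩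
  have hnb' : ∀ i, 1 ≤ i → i < p.k → ¬ blockedAt H r S x y p i :=
    fun i h1 h2 hb => hnb ⟨i, h1, h2, hb⟩
  have hrds : r = SepRule.d ∨ r = SepRule.s := by
    cases r
    · exact Or.inl rfl
    · exact Or.inr rfl
  by_cases hD1 : r = SepRule.s ∨ vj ∉ S
  · -- Variant D1a : insert vj with  v0 ↔ vj → vi
    refine ⟨insert2 p t vj EKind.bi EKind.fwd, ?_, ?_, ?_, ?_, ?_⟩
    · refine insert2_valid hv ht (fun h => EKind.noConfusion h) (fun h => EKind.noConfusion h)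
        (fun _ => by rw [hZt]; exact C.hBj)
        (fun _ => by rw [hZt1]; exact C.hDji)
        (fun h => EKind.noConfusion h) (fun h => EKind.noConfusion h)
    · rw [insert2_Z_le (Nat.zero_le t)]; exact h0
    · show (insert2 p t vj EKind.bi EKind.fwd).Z (p.k + 1) = y
      rw [insert2_Z_ge (by omega), show p.k + 1 - 1 = p.k from rfl]; exact hkk
    · refine insert2_notBlocked hnb ht ?_ ?_ ?_
      · intro ht1 hb
        refine hnb' t ht1 (by omega) (transfer_t ht1 ?_ (fun h => EKind.noConfusion h) hb)
        rw [hEbi]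
      · intro hb
        rcases hb with ⟨hc, _⟩ | ⟨_, hzS, hcond⟩
        · have h2 := hc.2
          rw [insert2_E_t1] at h2
          exact h2
        · rw [insert2_Z_mid] at hzS
          rcases hD1 with hrs | hnjS
          · rcases hcond with hd | ⟨_, hsc⟩ | ⟨hbw, _⟩
            · rw [hrs] at hd; exact SepRule.noConfusion hd
            · rw [insert2_Z_ge (s := t+1+1) (by omega), show t+1+1-1 = t+1 from rfl, hZt1,
                insert2_Z_mid] at hsc
              exact hsc hsccji
            · rw [show t+1-1 = t from rfl, insert2_E_t] at hbw
              exact EKind.noConfusion hbw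
          · exact hnjS hzS
      · intro hlt hb
        refine hnb' (t+1) (by omega) hlt (transfer_t2 ?_ (fun h => EKind.noConfusion h) hb)
        rw [hEbi]
        exact Iff.rfl
    · refine badSet_insert2_lt ht hbadt ?_ ?_
      · rintro ⟨_, hor⟩
        rw [insert2_Z_le (le_refl t), insert2_Z_mid, hZt] at hor
        rcases hor with ⟨_, h2⟩ | ⟨h1, _⟩
        · exact C.hij h2.symm
        · exact C.h0i h1
      · rintro ⟨hE, _⟩
        rw [insert2_E_t1] at hE
        exact EKind.noConfusion hE
  · -- r = d and vj ∈ S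
    have hrd : r = SepRule.d := by
      rcases hrds with h | h
      · exact h
      · exact absurd (Or.inl h) hD1
    have hvjS : vj ∈ S := by
      by_contra h
      exact hD1 (Or.inr h)
    by_cases hviS : vi ∈ S ∧ t + 1 < p.k
    · -- vi is an internal vertex of the path lying in S, so it must be a collider
      have hcolhead : MPath.headAtFst (p.E (t+1)) := by
        by_contra hnc
        refine hnb' (t+1) (by omega) hviS.2 (Or.inr ⟨?_, by rw [hZt1]; exact hviS.1, Or.inl hrd⟩)
        intro hc
        exact hnc hc.2
      cases hE1 : p.E (t+1) with
      | fwd => rw [hE1] at hcolhead; exact hcolhead.elim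
      | bwd =>
        have hDu : H.D (p.Z (t+2)) vi := by
          have h := (hv (t+1) hviS.2).2.1 hE1
          rwa [hZt1] at h
        by_cases huj : p.Z (t+2) = vj
        · -- impossible: vj would be a non-collider in S
          exfalso
          have ht2k : t + 2 < p.k := by
            rcases eq_or_lt_of_le (show t+2 ≤ p.k by omega) with h | h
            · exfalso
              apply hyS
              have : y = vj := by rw [← hkk, ← h]; exact huj
              rw [this]; exact hvjS
            · exact h
          refine hnb' (t+2) (by omega) ht2k
            (Or.inr ⟨?_, by rw [huj]; exact hvjS, Or.inl hrd⟩)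
          intro hc
          have h1 := hc.1
          rw [show t+2-1 = t+1 from rfl, hE1] at h1
          exact h1
        · -- Variant Sub-a2 : substitute vj for vi at position t+1
          refine ⟨substV p (t+1) vj, ?_, ?_, ?_, ?_, ?_⟩
          · refine substV_valid hv (by omega) hviS.2
              (fun h => by rw [show t+1-1 = t from rfl, hEbi] at h; exact EKind.noConfusion h)
              (fun h => by rw [show t+1-1 = t from rfl, hEbi] at h; exact EKind.noConfusion h)
              (fun _ => by rw [show t+1-1 = t from rfl, hZt]; exact C.hBj)
              (fun h => by rw [hE1] at h; exact EKind.noConfusion h)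
              (fun _ => C.hDsub _ hDu huj)
              (fun h => by rw [hE1] at h; exact EKind.noConfusion h)
          · rw [substV_Z_ne (by omega : 0 ≠ t+1)]; exact h0
          · show (substV p (t+1) vj).Z p.k = y
            rw [substV_Z_ne (by omega : p.k ≠ t+1)]; exact hkk
          · refine substV_notBlocked hrd hnb ?_
            rintro (⟨_, hz⟩ | ⟨hc, _, _⟩)
            · rw [substV_Z_eq] at hz
              exact hz (hanc vj hvjS)
            · refine hc ⟨?_, ?_⟩
              · show MPath.headAtSnd (p.E t)
                rw [hEbi]; trivial
              · show MPath.headAtFst (p.E (t+1))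
                rw [hE1]; trivial
          · exact badSet_substV_lt C.h0j.symm C.hij.symm t ⟨ht, hbadt⟩ (Or.inr rfl)
      | bi =>
        have hZ2 : p.Z (t+2) = v0 := by
          refine C.hBonly _ ?_
          have h := (hv (t+1) hviS.2).2.2 hE1
          rwa [hZt1] at h
        -- Variant Sub-a1
        refine ⟨substV p (t+1) vj, ?_, ?_, ?_, ?_, ?_⟩
        · refine substV_valid hv (by omega) hviS.2
            (fun h => by rw [show t+1-1 = t from rfl, hEbi] at h; exact EKind.noConfusion h)
            (fun h => by rw [show t+1-1 = t from rfl, hEbi] at h; exact EKind.noConfusion h)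
            (fun _ => by rw [show t+1-1 = t from rfl, hZt]; exact C.hBj)
            (fun h => by rw [hE1] at h; exact EKind.noConfusion h)
            (fun h => by rw [hE1] at h; exact EKind.noConfusion h)
            (fun _ => by rw [hZ2]; exact H.B_symm _ _ C.hBj)
        · rw [substV_Z_ne (by omega : 0 ≠ t+1)]; exact h0
        · show (substV p (t+1) vj).Z p.k = y
          rw [substV_Z_ne (by omega : p.k ≠ t+1)]; exact hkk
        · refine substV_notBlocked hrd hnb ?_
          rintro (⟨_, hz⟩ | ⟨hc, _, _⟩)
          · rw [substV_Z_eq] at hz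
            exact hz (hanc vj hvjS)
          · refine hc ⟨?_, ?_⟩
            · show MPath.headAtSnd (p.E t)
              rw [hEbi]; trivial
            · show MPath.headAtFst (p.E (t+1))
              rw [hE1]; trivial
        · exact badSet_substV_lt C.h0j.symm C.hij.symm t ⟨ht, hbadt⟩ (Or.inr rfl)
    · -- Variant D2a : insert vj with  v0 ↔ vj ← vi
      have hviS' : t + 1 < p.k → vi ∉ S := fun hlt hin => hviS ⟨hin, hlt⟩
      refine ⟨insert2 p t vj EKind.bi EKind.bwd, ?_, ?_, ?_, ?_, ?_⟩
      · refine insert2_valid hv ht (fun h => EKind.noConfusion h) (fun h => EKind.noConfusion h)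
          (fun _ => by rw [hZt]; exact C.hBj)
          (fun h => EKind.noConfusion h)
          (fun _ => by rw [hZt1]; exact C.hDij)
          (fun h => EKind.noConfusion h)
      · rw [insert2_Z_le (Nat.zero_le t)]; exact h0
      · show (insert2 p t vj EKind.bi EKind.bwd).Z (p.k + 1) = y
        rw [insert2_Z_ge (by omega), show p.k + 1 - 1 = p.k from rfl]; exact hkk
      · refine insert2_notBlocked hnb ht ?_ ?_ ?_
        · intro ht1 hb
          refine hnb' t ht1 (by omega) (transfer_t ht1 ?_ (fun h => EKind.noConfusion h) hb)
          rw [hEbi]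
        · rintro (⟨_, hz⟩ | ⟨hc, _, _⟩)
          · rw [insert2_Z_mid] at hz
            exact hz (hanc vj hvjS)
          · refine hc ⟨?_, ?_⟩
            · show MPath.headAtSnd ((insert2 p t vj EKind.bi EKind.bwd).E t)
              rw [insert2_E_t]; trivial
            · rw [insert2_E_t1]; trivial
        · intro hlt hb
          have hviS'' : vi ∉ S := hviS' hlt
          rcases hb with ⟨hc, _⟩ | ⟨_, hz, _⟩
          · have h1 := hc.1
            rw [show t+2-1 = t+1 from rfl, insert2_E_t1] at h1
            exact h1
          · rw [insert2_Z_ge (by omega), show t+2-1 = t+1 from rfl, hZt1] at hz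
            exact hviS'' hz
      · refine badSet_insert2_lt ht hbadt ?_ ?_
        · rintro ⟨_, hor⟩
          rw [insert2_Z_le (le_refl t), insert2_Z_mid, hZt] at hor
          rcases hor with ⟨_, h2⟩ | ⟨h1, _⟩
          · exact C.hij h2.symm
          · exact C.h0i h1
        · rintro ⟨hE, _⟩
          rw [insert2_E_t1] at hE
          exact EKind.noConfusion hE

end SurgeryStep
section SurgeryStepB

variable {V : Type u}

theorem surgery_stepB {H : DMG V} {v0 vi vj : V} (C : SurgeryCtx H v0 vi vj)
    (r : SepRule) {S : Set V} {x y : V} (hxS : x ∉ S) (hyS : y ∉ S)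
    (p : MPath V) (hv : p.valid H) (h0 : p.Z 0 = x) (hkk : p.Z p.k = y)
    (hnb : ¬ p.blocked H r S x y) (t : ℕ) (ht : t < p.k)
    (hEbi : p.E t = EKind.bi) (hZt : p.Z t = vi) (hZt1 : p.Z (t+1) = v0) :
    ∃ q : MPath V, q.valid H ∧ q.Z 0 = x ∧ q.Z q.k = y ∧ ¬ q.blocked H r S x y ∧
      (badSet v0 vi q).ncard < (badSet v0 vi p).ncard := by
  have hbadt : IsBadStep v0 vi p t := ⟨hEbi, Or.inr ⟨hZt, hZt1⟩⟩
  have hanc : ∀ z ∈ S, z ∈ H.ancSet (S ∪ {x, y}) :=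
    fun z hz => ⟨z, Or.inl hz, Relation.ReflTransGen.refl⟩
  have hsccji : vi ∈ H.scc vj :=
    ⟨Relation.ReflTransGen.single C.hDji, Relation.ReflTransGen.single C.hDij⟩
  have hnb' : ∀ i, 1 ≤ i → i < p.k → ¬ blockedAt H r S x y p i :=
    fun i h1 h2 hb => hnb ⟨i, h1, h2, hb⟩
  have hrds : r = SepRule.d ∨ r = SepRule.s := by
    cases r
    · exact Or.inl rfl
    · exact Or.inr rfl
  by_cases hD1 : r = SepRule.s ∨ vj ∉ S
  · -- Variant D1b : insert vj with  vi ← vj ↔ v0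
    refine ⟨insert2 p t vj EKind.bwd EKind.bi, ?_, ?_, ?_, ?_, ?_⟩
    · refine insert2_valid hv ht (fun h => EKind.noConfusion h)
        (fun _ => by rw [hZt]; exact C.hDji)
        (fun h => EKind.noConfusion h) (fun h => EKind.noConfusion h)
        (fun h => EKind.noConfusion h)
        (fun _ => by rw [hZt1]; exact H.B_symm _ _ C.hBj)
    · rw [insert2_Z_le (Nat.zero_le t)]; exact h0
    · show (insert2 p t vj EKind.bwd EKind.bi).Z (p.k + 1) = y
      rw [insert2_Z_ge (by omega), show p.k + 1 - 1 = p.k from rfl]; exact hkk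
    · refine insert2_notBlocked hnb ht ?_ ?_ ?_
      · intro ht1 hb
        refine hnb' t ht1 (by omega) (transfer_t ht1 ?_ (fun h => EKind.noConfusion h) hb)
        rw [hEbi]
        exact Iff.rfl
      · intro hb
        rcases hb with ⟨hc, _⟩ | ⟨_, hzS, hcond⟩
        · have h1 := hc.1
          rw [show t+1-1 = t from rfl, insert2_E_t] at h1
          exact h1
        · rw [insert2_Z_mid] at hzS
          rcases hD1 with hrs | hnjS
          · rcases hcond with hd | ⟨hf, _⟩ | ⟨_, hsc⟩
            · rw [hrs] at hd; exact SepRule.noConfusion hd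
            · rw [insert2_E_t1] at hf
              exact EKind.noConfusion hf
            · rw [show t+1-1 = t from rfl, insert2_Z_le (le_refl t), hZt,
                insert2_Z_mid] at hsc
              exact hsc hsccji
          · exact hnjS hzS
      · intro hlt hb
        refine hnb' (t+1) (by omega) hlt (transfer_t2 ?_ (fun h => EKind.noConfusion h) hb)
        rw [hEbi]
    · refine badSet_insert2_lt ht hbadt ?_ ?_
      · rintro ⟨hE, _⟩
        rw [insert2_E_t] at hE
        exact EKind.noConfusion hE
      · rintro ⟨_, hor⟩
        rw [insert2_Z_mid, insert2_Z_ge (s := t+1+1) (by omega),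
          show t+1+1-1 = t+1 from rfl, hZt1] at hor
        rcases hor with ⟨h1, _⟩ | ⟨h2, _⟩
        · exact C.h0j h1.symm
        · exact C.hij h2.symm
  · -- r = d and vj ∈ S
    have hrd : r = SepRule.d := by
      rcases hrds with h | h
      · exact h
      · exact absurd (Or.inl h) hD1
    have hvjS : vj ∈ S := by
      by_contra h
      exact hD1 (Or.inr h)
    by_cases hviS : vi ∈ S ∧ 1 ≤ t
    · -- vi internal in S, must be a collider: headAtSnd (p.E (t-1))
      have hcolhead : MPath.headAtSnd (p.E (t-1)) := by
        by_contra hnc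
        refine hnb' t hviS.2 ht (Or.inr ⟨?_, by rw [hZt]; exact hviS.1, Or.inl hrd⟩)
        intro hc
        exact hnc hc.1
      cases hE0 : p.E (t-1) with
      | bwd => rw [hE0] at hcolhead; exact hcolhead.elim
      | fwd =>
        have hDu : H.D (p.Z (t-1)) vi := by
          have h := (hv (t-1) (by omega)).1 hE0
          rwa [show t-1+1 = t by omega, hZt] at h
        by_cases huj : p.Z (t-1) = vj
        · exfalso
          rcases Nat.eq_zero_or_pos (t-1) with h00 | hpos
          · apply hxS
            have : x = vj := by rw [← h0, ← h00]; exact huj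
            rw [this]; exact hvjS
          · refine hnb' (t-1) hpos (by omega)
              (Or.inr ⟨?_, by rw [huj]; exact hvjS, Or.inl hrd⟩)
            intro hc
            have h2 := hc.2
            rw [hE0] at h2
            exact h2
        · -- Variant Sub-b2 : substitute vj for vi at position t
          refine ⟨substV p t vj, ?_, ?_, ?_, ?_, ?_⟩
          · refine substV_valid hv hviS.2 ht
              (fun _ => C.hDsub _ hDu huj)
              (fun h => by rw [hE0] at h; exact EKind.noConfusion h)
              (fun h => by rw [hE0] at h; exact EKind.noConfusion h)
              (fun h => by rw [hEbi] at h; exact EKind.noConfusion h)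
              (fun h => by rw [hEbi] at h; exact EKind.noConfusion h)
              (fun _ => by rw [hZt1]; exact H.B_symm _ _ C.hBj)
          · rw [substV_Z_ne (by omega : 0 ≠ t)]; exact h0
          · show (substV p t vj).Z p.k = y
            rw [substV_Z_ne (by omega : p.k ≠ t)]; exact hkk
          · refine substV_notBlocked hrd hnb ?_
            rintro (⟨_, hz⟩ | ⟨hc, _, _⟩)
            · rw [substV_Z_eq] at hz
              exact hz (hanc vj hvjS)
            · refine hc ⟨?_, ?_⟩
              · show MPath.headAtSnd (p.E (t-1))
                rw [hE0]; trivial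
              · show MPath.headAtFst (p.E t)
                rw [hEbi]; trivial
          · exact badSet_substV_lt C.h0j.symm C.hij.symm t ⟨ht, hbadt⟩ (Or.inl rfl)
      | bi =>
        have hZm1 : p.Z (t-1) = v0 := by
          refine C.hBonly' _ ?_
          have h := (hv (t-1) (by omega)).2.2 hE0
          rwa [show t-1+1 = t by omega, hZt] at h
        -- Variant Sub-b1
        refine ⟨substV p t vj, ?_, ?_, ?_, ?_, ?_⟩
        · refine substV_valid hv hviS.2 ht
            (fun h => by rw [hE0] at h; exact EKind.noConfusion h)
            (fun h => by rw [hE0] at h; exact EKind.noConfusion h)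
            (fun _ => by rw [hZm1]; exact C.hBj)
            (fun h => by rw [hEbi] at h; exact EKind.noConfusion h)
            (fun h => by rw [hEbi] at h; exact EKind.noConfusion h)
            (fun _ => by rw [hZt1]; exact H.B_symm _ _ C.hBj)
        · rw [substV_Z_ne (by omega : 0 ≠ t)]; exact h0
        · show (substV p t vj).Z p.k = y
          rw [substV_Z_ne (by omega : p.k ≠ t)]; exact hkk
        · refine substV_notBlocked hrd hnb ?_
          rintro (⟨_, hz⟩ | ⟨hc, _, _⟩)
          · rw [substV_Z_eq] at hz
            exact hz (hanc vj hvjS)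
          · refine hc ⟨?_, ?_⟩
            · show MPath.headAtSnd (p.E (t-1))
              rw [hE0]; trivial
            · show MPath.headAtFst (p.E t)
              rw [hEbi]; trivial
        · exact badSet_substV_lt C.h0j.symm C.hij.symm t ⟨ht, hbadt⟩ (Or.inl rfl)
    · -- Variant D2b : insert vj with  vi → vj ↔ v0
      have hviS' : 1 ≤ t → vi ∉ S := fun h1 hin => hviS ⟨hin, h1⟩
      refine ⟨insert2 p t vj EKind.fwd EKind.bi, ?_, ?_, ?_, ?_, ?_⟩
      · refine insert2_valid hv ht
          (fun _ => by rw [hZt]; exact C.hDij)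
          (fun h => EKind.noConfusion h) (fun h => EKind.noConfusion h)
          (fun h => EKind.noConfusion h) (fun h => EKind.noConfusion h)
          (fun _ => by rw [hZt1]; exact H.B_symm _ _ C.hBj)
      · rw [insert2_Z_le (Nat.zero_le t)]; exact h0
      · show (insert2 p t vj EKind.fwd EKind.bi).Z (p.k + 1) = y
        rw [insert2_Z_ge (by omega), show p.k + 1 - 1 = p.k from rfl]; exact hkk
      · refine insert2_notBlocked hnb ht ?_ ?_ ?_
        · intro ht1 hb
          have hviS'' : vi ∉ S := hviS' ht1
          rcases hb with ⟨hc, _⟩ | ⟨_, hz, _⟩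
          · have h2 := hc.2
            rw [insert2_E_t] at h2
            exact h2
          · rw [insert2_Z_le (le_refl t), hZt] at hz
            exact hviS'' hz
        · rintro (⟨_, hz⟩ | ⟨hc, _, _⟩)
          · rw [insert2_Z_mid] at hz
            exact hz (hanc vj hvjS)
          · refine hc ⟨?_, ?_⟩
            · show MPath.headAtSnd ((insert2 p t vj EKind.fwd EKind.bi).E t)
              rw [insert2_E_t]; trivial
            · rw [insert2_E_t1]; trivial
        · intro hlt hb
          refine hnb' (t+1) (by omega) hlt (transfer_t2 ?_ (fun h => EKind.noConfusion h) hb)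
          rw [hEbi]
      · refine badSet_insert2_lt ht hbadt ?_ ?_
        · rintro ⟨hE, _⟩
          rw [insert2_E_t] at hE
          exact EKind.noConfusion hE
        · rintro ⟨_, hor⟩
          rw [insert2_Z_mid, insert2_Z_ge (s := t+1+1) (by omega),
            show t+1+1-1 = t+1 from rfl, hZt1] at hor
          rcases hor with ⟨h1, _⟩ | ⟨h2, _⟩
          · exact C.h0j h1.symm
          · exact C.hij h2.symm

end SurgeryStepB
section SurgeryMain

variable {V : Type u}

theorem surgery_all {H : DMG V} {v0 vi vj : V} (C : SurgeryCtx H v0 vi vj)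
    (r : SepRule) {S : Set V} {x y : V} (hxS : x ∉ S) (hyS : y ∉ S) :
    ∀ N (p : MPath V), (badSet v0 vi p).ncard = N → p.valid H → p.Z 0 = x → p.Z p.k = y →
      ¬ p.blocked H r S x y →
      ∃ q : MPath V, q.valid (H.removeBi v0 vi) ∧ q.Z 0 = x ∧ q.Z q.k = y ∧
        ¬ q.blocked H r S x y := by
  intro N
  induction N using Nat.strong_induction_on with
  | _ N IH =>
    intro p hN hv h0 hk hnb
    by_cases hbad : ∃ t, t < p.k ∧ IsBadStep v0 vi p t
    · obtain ⟨t, ht, hb⟩ := hbad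
      rcases hb with ⟨hEbi, ⟨hZt, hZt1⟩ | ⟨hZt, hZt1⟩⟩
      · obtain ⟨q, hqv, hq0, hqk, hqnb, hqc⟩ :=
          surgery_stepA C r hxS hyS p hv h0 hk hnb t ht hEbi hZt hZt1
        exact IH _ (hN ▸ hqc) q rfl hqv hq0 hqk hqnb
      · obtain ⟨q, hqv, hq0, hqk, hqnb, hqc⟩ :=
          surgery_stepB C r hxS hyS p hv h0 hk hnb t ht hEbi hZt hZt1
        exact IH _ (hN ▸ hqc) q rfl hqv hq0 hqk hqnb
    · refine ⟨p, ?_, h0, hk, hnb⟩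
      intro s hs
      obtain ⟨hf, hb', hbi⟩ := hv s hs
      refine ⟨hf, hb', fun he => ⟨hbi he, ?_⟩⟩
      intro hpair
      exact hbad ⟨s, hs, he, hpair⟩

theorem rSep_of_removeBi {H : DMG V} {v0 vi vj : V} (C : SurgeryCtx H v0 vi vj)
    (r : SepRule) {S : Set V} {x y : V} (hxS : x ∉ S) (hyS : y ∉ S)
    (h : rSep (H.removeBi v0 vi) r S x y) : rSep H r S x y := by
  intro p hv h0 hk
  by_contra hnb
  obtain ⟨q, hqv, hq0, hqk, hqnb⟩ :=
    surgery_all C r hxS hyS (badSet v0 vi p).ncard p rfl hv h0 hk hnb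
  exact hqnb ((MPath.blocked_congr (rfl : (DMG.removeBi H v0 vi).D = H.D) q r S x y).1
    (h q hqv hq0 hqk))

theorem IM_removeBi {H : DMG V} {v0 vi vj : V} (C : SurgeryCtx H v0 vi vj) (r : SepRule) :
    IM H r = IM (H.removeBi v0 vi) r := by
  ext ⟨a, b, T⟩
  simp only [IM, Set.mem_setOf_eq]
  constructor
  · rintro ⟨h1, h2, h3, h4⟩
    refine ⟨h1, h2, h3, fun p hp hp0 hpk => ?_⟩
    have hpv : p.valid H := fun i hi =>
      ⟨(hp i hi).1, (hp i hi).2.1, fun he => ((hp i hi).2.2 he).1⟩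
    exact (MPath.blocked_congr (rfl : (DMG.removeBi H v0 vi).D = H.D) p r T a b).2
      (h4 p hpv hp0 hpk)
  · rintro ⟨h1, h2, h3, h4⟩
    exact ⟨h1, h2, h3, rSep_of_removeBi C r h2 h3 h4⟩

end SurgeryMain
section StarConstruction

variable {V : Type u}

/-- the "star pairs" `{v0, L l}` -/
def starPair {c : ℕ} (v0 : V) (L : Fin c → V) (a b : V) : Prop :=
  (a = v0 ∧ ∃ l, L l = b) ∨ (b = v0 ∧ ∃ l, L l = a)

/-- the star DMG: directed 2-cycles between all non-star pairs, bidirected star pairs -/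
def starDMG {c : ℕ} (v0 : V) (L : Fin c → V) (hL : ∀ l, L l ≠ v0) : DMG V where
  D a b := a ≠ b ∧ ¬ starPair v0 L a b
  B := starPair v0 L
  D_irrefl x h := h.1 rfl
  B_symm a b h := h.elim (fun h => Or.inr h) (fun h => Or.inl h)
  B_irrefl a h := by
    rcases h with ⟨h1, l, h2⟩ | ⟨h1, l, h2⟩ <;> exact hL l (h2.trans h1)

theorem starDMG_ucomp_adj {c : ℕ} (v0 : V) (L : Fin c → V) (hL : ∀ l, L l ≠ v0) (a b : V) :
    (starDMG v0 L hL).ucomp.Adj a b ↔ starPair v0 L a b := by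
  constructor
  · rintro ⟨hne, hD1, _⟩
    by_contra hs
    exact hD1 ⟨hne, hs⟩
  · intro hs
    have hne : a ≠ b := by
      rcases hs with ⟨h1, l, h2⟩ | ⟨h1, l, h2⟩ <;>
        · rintro rfl; exact hL l (h2.trans h1)
    exact ⟨hne, fun hD => hD.2 hs, fun hD =>
      hD.2 (hs.elim (fun h => Or.inr h) (fun h => Or.inl h))⟩

theorem starDMG_ecc {c : ℕ} (hc1 : 1 ≤ c) (v0 : V) (L : Fin c → V) (hL : ∀ l, L l ≠ v0)
    (hLinj : Function.Injective L) [Fintype V] :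
    ecc (starDMG v0 L hL).ucomp = c := by
  set Gr := (starDMG v0 L hL).ucomp with hGr
  have hmem : c ∈ {K | ∃ C : Fin K → Set V, (∀ k, Gr.IsClique (C k)) ∧
      ∀ x y : V, Gr.Adj x y → ∃ k, x ∈ C k ∧ y ∈ C k} := by
    refine ⟨fun k => {v0, L k}, ?_, ?_⟩
    · intro k a ha b hb hne
      simp only [Set.mem_insert_iff, Set.mem_singleton_iff] at ha hb
      rcases ha with ha | ha <;> rcases hb with hb | hb
      · exact absurd (ha.trans hb.symm) hne
      · rw [ha, hb]; exact (starDMG_ucomp_adj v0 L hL _ _).2 (Or.inl ⟨rfl, k, rfl⟩)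
      · rw [ha, hb]; exact (starDMG_ucomp_adj v0 L hL _ _).2 (Or.inr ⟨rfl, k, rfl⟩)
      · exact absurd (ha.trans hb.symm) hne
    · intro a b hab
      rcases (starDMG_ucomp_adj v0 L hL a b).1 hab with ⟨h1, l, h2⟩ | ⟨h1, l, h2⟩
      · exact ⟨l, by rw [h1]; exact Set.mem_insert _ _, by rw [← h2]; exact Set.mem_insert_of_mem _ rfl⟩
      · exact ⟨l, by rw [← h2]; exact Set.mem_insert_of_mem _ rfl, by rw [h1]; exact Set.mem_insert _ _⟩
  refine le_antisymm (Nat.sInf_le hmem) (le_csInf ⟨c, hmem⟩ ?_)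
  rintro K ⟨Cl, hclq, hcov⟩
  have hadjL : ∀ l : Fin c, Gr.Adj v0 (L l) :=
    fun l => (starDMG_ucomp_adj v0 L hL _ _).2 (Or.inl ⟨rfl, l, rfl⟩)
  choose f hf1 hf2 using fun l : Fin c => hcov v0 (L l) (hadjL l)
  have hfinj : Function.Injective f := by
    intro a b hab
    by_contra hne
    have hLne : L a ≠ L b := fun h => hne (hLinj h)
    have hAdj := hclq (f a) (hf2 a) (hab ▸ hf2 b) hLne
    rcases (starDMG_ucomp_adj v0 L hL _ _).1 hAdj with ⟨h1, _⟩ | ⟨h1, _⟩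
    · exact hL a h1
    · exact hL b h1
  have := Fintype.card_le_of_injective f hfinj
  simpa using this

end StarConstruction
/-- worst-case lower bound on the number of experiments needed to
identify the non-adjacent bidirected edges of a DMG. -/
theorem lower_bound_bidirected_num_experiments {V : Type u} [Fintype V] (r : SepRule)
    (n c : ℕ) (hn : Fintype.card V = n) (hn2 : 2 ≤ n) (hc1 : 1 ≤ c) (hc2 : c ≤ n - 1) :
    ∃ G : DMG V, ecc G.ucomp = c ∧
      ∀ 𝓘 : Set (Set V), 𝓘.Finite → 𝓘.ncard < c →
        ∃ G' : DMG V, IMEquiv G G' r 𝓘 ∧ (G'.D ≠ G.D ∨ G'.BN ≠ G.BN) := by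
  classical
  -- pick c+1 distinct vertices
  obtain ⟨f⟩ : Nonempty (Fin (c+1) ↪ V) := by
    apply Function.Embedding.nonempty_of_card_le
    simp only [Fintype.card_fin]
    omega
  set v0 : V := f 0 with hv0
  set L : Fin c → V := fun l => f l.succ with hLdef
  have hLv0 : ∀ l, L l ≠ v0 := by
    intro l h
    have := f.injective h
    exact absurd this (by simp [Fin.ext_iff])
  have hLinj : Function.Injective L := by
    intro a b h
    have := f.injective h
    simpa [Fin.ext_iff] using this
  set G : DMG V := starDMG v0 L hLv0 with hG
  refine ⟨G, starDMG_ecc hc1 v0 L hLv0 hLinj, ?_⟩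
  intro 𝓘 hfin hcard
  -- pigeonhole: some leaf index works for all I ∈ 𝓘
  have hgood : ∃ i : Fin c, ∀ I ∈ 𝓘, v0 ∈ I ∨ L i ∈ I ∨ ∃ j : Fin c, j ≠ i ∧ L j ∉ I := by
    by_contra hno
    push_neg at hno
    choose F hF using hno
    have hFinj : Function.Injective F := by
      intro a b hab
      by_contra hne
      exact ((hF b).2.2.1) (hab ▸ (hF a).2.2.2 b (Ne.symm hne))
    have h1 : c ≤ 𝓘.ncard := by
      haveI := hfin.fintype
      have h2 : Fintype.card (Fin c) ≤ Fintype.card 𝓘 :=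
        Fintype.card_le_of_injective (fun i => ⟨F i, (hF i).1⟩)
          (fun a b h => hFinj (congrArg Subtype.val h))
      rw [Fintype.card_fin] at h2
      rwa [Set.ncard_eq_toFinset_card', Set.toFinset_card]
    omega
  obtain ⟨i, hi⟩ := hgood
  refine ⟨G.removeBi v0 (L i), ?_, Or.inr ?_⟩
  · -- 𝓘-r-Markov equivalence
    intro I hI
    have hBcase1 : (v0 ∈ I ∨ L i ∈ I) →
        IM (G.intervene I) r = IM ((G.removeBi v0 (L i)).intervene I) r := by
      intro hor
      refine IM_congr (show (G.intervene I).D = ((G.removeBi v0 (L i)).intervene I).D from rfl)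
        ?_ r
      intro a b
      constructor
      · rintro ⟨hB, haI, hbI⟩
        refine ⟨⟨hB, ?_⟩, haI, hbI⟩
        rintro (⟨rfl, rfl⟩ | ⟨rfl, rfl⟩)
        · rcases hor with h | h
          · exact haI h
          · exact hbI h
        · rcases hor with h | h
          · exact hbI h
          · exact haI h
      · rintro ⟨⟨hB, _⟩, haI, hbI⟩
        exact ⟨hB, haI, hbI⟩
    by_cases hv0I : v0 ∈ I
    · exact hBcase1 (Or.inl hv0I)
    by_cases hviI : L i ∈ I
    · exact hBcase1 (Or.inr hviI)
    rcases hi I hI with h | h | ⟨j, hji, hjI⟩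
    · exact absurd h hv0I
    · exact absurd h hviI
    · -- the surgery case
      have hDv0i : ∀ u, (G.intervene I).D u (L i) → u ≠ v0 := by
        rintro u ⟨⟨_, hnst⟩, _⟩ rfl
        exact hnst (Or.inl ⟨rfl, i, rfl⟩)
      have hC : SurgeryCtx (G.intervene I) v0 (L i) (L j) :=
        { hij := fun h => hji (hLinj h).symm
          h0i := fun h => hLv0 i h.symm
          h0j := fun h => hLv0 j h.symm
          hBj := ⟨Or.inl ⟨rfl, j, rfl⟩, hv0I, hjI⟩
          hDij := ⟨⟨fun h => hji (hLinj h).symm, by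
            rintro (⟨h1, _⟩ | ⟨h1, _⟩)
            · exact hLv0 i h1
            · exact hLv0 j h1⟩, hjI⟩
          hDji := ⟨⟨fun h => hji (hLinj h), by
            rintro (⟨h1, _⟩ | ⟨h1, _⟩)
            · exact hLv0 j h1
            · exact hLv0 i h1⟩, hviI⟩
          hDv0 := hDv0i
          hDsub := by
            rintro u ⟨⟨hne, hnst⟩, _⟩ huj
            refine ⟨⟨huj, ?_⟩, hjI⟩
            rintro (⟨h1, _⟩ | ⟨h1, _⟩)
            · exact hDv0i u ⟨⟨hne, hnst⟩, hviI⟩ h1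
            · exact hLv0 j h1
          hBonly := by
            rintro z ⟨(⟨h1, _⟩ | ⟨h1, _⟩), _, _⟩
            · exact absurd h1 (hLv0 i)
            · exact h1
          hBonly' := by
            rintro z ⟨(⟨h1, _⟩ | ⟨h1, _⟩), _, _⟩
            · exact h1
            · exact absurd h1 (hLv0 i) }
      calc IM (G.intervene I) r
          = IM ((G.intervene I).removeBi v0 (L i)) r := IM_removeBi hC r
        _ = IM ((G.removeBi v0 (L i)).intervene I) r := by
            refine IM_congr (show ((G.intervene I).removeBi v0 (L i)).D =
                ((G.removeBi v0 (L i)).intervene I).D from rfl) ?_ r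
            intro a b
            constructor
            · rintro ⟨⟨hB, haI, hbI⟩, hp⟩
              exact ⟨⟨hB, hp⟩, haI, hbI⟩
            · rintro ⟨⟨hB, hp⟩, haI, hbI⟩
              exact ⟨⟨hB, haI, hbI⟩, hp⟩
  · -- the non-adjacent bidirected edges differ
    intro hBN
    have h1 : G.BN v0 (L i) :=
      ⟨Or.inl ⟨rfl, i, rfl⟩, fun hD => hD.2 (Or.inl ⟨rfl, i, rfl⟩),
        fun hD => hD.2 (Or.inr ⟨rfl, i, rfl⟩)⟩
    have h2 : ¬ (G.removeBi v0 (L i)).BN v0 (L i) := fun h => h.1.2 (Or.inl ⟨rfl, rfl⟩)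
    rw [hBN] at h2
    exact h2 h1
end

section
/- Let G = (V, D, B) be a DMG, let r ∈ {d, σ}, let I ⊆ V and let X ∈ I. Then for every Y ∈ V ∖ {X}: Y is a descendant of X in the intervened graph G_Ī if and only if the empty set does not r-separate X and Y in G_Ī. -/
universe u

/-- auxiliary: extract an indexed directed walk from an `anc` relation -/
lemma DMG.anc_fun {V : Type u} (G : DMG V) {x y : V} (h : G.anc x y) :
    ∃ k, ∃ z : ℕ → V, z 0 = x ∧ z k = y ∧ ∀ i < k, G.D (z i) (z (i+1)) := by
  induction h with
  | refl => exact ⟨0, fun _ => x, rfl, rfl, fun i hi => absurd hi (Nat.not_lt_zero i)⟩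
  | @tail b c _ hbc ih =>
    obtain ⟨k, z, hz0, hzk, hstep⟩ := ih
    refine ⟨k + 1, fun i => if i ≤ k then z i else c, ?_, ?_, ?_⟩
    · simpa using hz0
    · simp
    · intro i hi
      rcases lt_or_eq_of_le (Nat.lt_succ_iff.mp hi) with h' | rfl
      · simp only [if_pos (le_of_lt h'), if_pos (Nat.succ_le_of_lt h')]
        exact hstep i h'
      · simp only [le_refl, if_pos, if_neg (by omega : ¬ i + 1 ≤ i), hzk]
        exact hzk ▸ hbc

/-- auxiliary: an intervened vertex has no proper ancestors in the intervened graph -/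
lemma DMG.anc_eq_of_intervened {V : Type u} (G : DMG V) (I : Set V) {X z : V}
    (hX : X ∈ I) (h : (G.intervene I).anc z X) : z = X := by
  rcases Relation.ReflTransGen.cases_tail h with h' | ⟨c, _, hc⟩
  · exact h'.symm
  · exact absurd hX hc.2

/-- after intervening on `I ∋ X`, `Y` is a descendant of `X` in the
intervened graph iff the empty set does not `r`-separate `X` and `Y` there. -/
theorem descendant_iff_dependent_after_intervention {V : Type u} [Fintype V]
    (G : DMG V) (r : SepRule) (I : Set V) (X : V) (hX : X ∈ I) (Y : V) (hXY : Y ≠ X) :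
    (G.intervene I).anc X Y ↔ ¬ rSep (G.intervene I) r ∅ X Y := by
  set H := G.intervene I with hH
  constructor
  · -- descendant → not separated: the directed path is unblockable
    intro hanc hsep
    obtain ⟨k, z, hz0, hzk, hstep⟩ := H.anc_fun hanc
    have hk : 1 ≤ k := by
      rcases Nat.eq_zero_or_pos k with rfl | h
      · exact absurd (hz0.symm.trans hzk).symm hXY
      · exact h
    set p : MPath V := ⟨k, z, fun _ => EKind.fwd, hk⟩ with hp
    have hval : p.valid H := by
      intro i hi
      refine ⟨fun _ => hstep i hi, fun h => ?_, fun h => ?_⟩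
      · exact nomatch h
      · exact nomatch h
    obtain ⟨i, hi1, hik, hcase⟩ := hsep p hval hz0 hzk
    rcases hcase with ⟨⟨_, hhf⟩, _⟩ | ⟨_, hmem, _⟩
    · exact hhf
    · exact hmem
  · -- not separated → descendant
    intro hns
    rw [rSep] at hns
    push_neg at hns
    obtain ⟨p, hval, hz0, hzk, hnb⟩ := hns
    have key : ∀ j, j ≤ p.k →
        (H.anc X Y ∨ (H.anc X (p.Z j) ∧ (1 ≤ j → p.E (j-1) = EKind.fwd))) := by
      intro j
      induction j with
      | zero =>
        intro _
        exact Or.inr ⟨hz0 ▸ Relation.ReflTransGen.refl, by omega⟩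
      | succ j ih =>
        intro hjk
        have hjk' : j < p.k := hjk
        rcases ih (le_of_lt hjk') with h | ⟨hax, hef⟩
        · exact Or.inl h
        obtain ⟨hf, hb, hbi⟩ := hval j hjk'
        have main : p.Z j ∉ I → MPath.headAtFst (p.E j) →
            H.anc X Y ∨ (H.anc X (p.Z (j+1)) ∧ (1 ≤ j+1 → p.E (j+1-1) = EKind.fwd)) := by
          intro hnotin hhf
          rcases Nat.eq_zero_or_pos j with rfl | hj1
          · exact absurd (by rw [hz0]; exact hX) hnotin
          · have hcol : p.collider j := ⟨by rw [hef hj1]; trivial, hhf⟩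
            have hin : p.Z j ∈ H.ancSet (∅ ∪ {X, Y}) := by
              by_contra hni
              exact hnb ⟨j, hj1, hjk', Or.inl ⟨hcol, hni⟩⟩
            obtain ⟨w, hw, hancw⟩ := hin
            have hw' : w = X ∨ w = Y := by simpa using hw
            rcases hw' with hwX | hwY
            · rw [hwX] at hancw
              have hzx : p.Z j = X := G.anc_eq_of_intervened I hX hancw
              exact absurd (hzx ▸ hX) hnotin
            · rw [hwY] at hancw
              exact Or.inl (hax.trans hancw)
        cases hEj : p.E j with
        | fwd =>
          exact Or.inr ⟨hax.tail (hf hEj), fun _ => by simpa using hEj⟩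
        | bwd =>
          exact main (hb hEj).2 (by rw [hEj]; trivial)
        | bi =>
          exact main (hbi hEj).2.1 (by rw [hEj]; trivial)
    rcases key p.k le_rfl with h | ⟨h, _⟩
    · exact h
    · rwa [hzk] at h
end

section
/- Let G = (V, D, B) be a DMG, let r ∈ {d, σ}, and let X, Y be distinct vertices with (X,Y) ∉ D and (Y,X) ∉ D. Let I ⊆ V satisfy Pa_G({X,Y}) ⊆ I, X ∉ I and Y ∉ I. Then {X,Y} ∈ B if and only if Pa_G({X,Y}) does not r-separate X and Y in the intervened graph G_Ī. -/
universe u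

section AuxLemmas

variable {V : Type u}

lemma anc_into_I {G : DMG V} {I : Set V} {z t : V}
    (h : (G.intervene I).anc z t) : t ∈ I → z = t := by
  induction h with
  | refl => exact fun _ => rfl
  | tail _ e ih => exact fun ht => absurd ht e.2

lemma anc_to_notI {G : DMG V} {I : Set V} {z x : V}
    (hx : ∀ a, G.D a x → a ∈ I)
    (h : (G.intervene I).anc z x) (hz : z ∉ I) : z = x := by
  rcases Relation.ReflTransGen.cases_tail h with h' | ⟨w, hzw, hwx⟩
  · exact h'.symm
  · exact absurd (by rw [anc_into_I hzw (hx _ hwx.1)]; exact hx _ hwx.1) hz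

lemma notin_ancSet {G : DMG V} {I : Set V} {X Y z : V}
    (hI1 : G.paSet {X, Y} ⊆ I) (hz : z ∉ I) (hzX : z ≠ X) (hzY : z ≠ Y) :
    z ∉ (G.intervene I).ancSet (G.paSet {X, Y} ∪ {X, Y}) := by
  rintro ⟨t, ht, hanc⟩
  rcases ht with ht | ht
  · exact hz (by rw [anc_into_I hanc (hI1 ht)]; exact hI1 ht)
  · simp only [Set.mem_insert_iff, Set.mem_singleton_iff] at ht
    rcases ht with rfl | rfl
    · exact hzX (anc_to_notI (fun a ha => hI1 ⟨t, Set.mem_insert _ _, ha⟩) hanc hz)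
    · exact hzY (anc_to_notI (fun a ha => hI1 ⟨t, Set.mem_insert_of_mem _ rfl, ha⟩) hanc hz)

end AuxLemmas

/-- for non-adjacent `X, Y`, after intervening on all their parents,
`{X,Y}` is a bidirected edge iff `Pa_G({X,Y})` does not `r`-separate `X` and `Y` in
the intervened graph. -/
theorem bidirected_iff_dependent_after_intervention {V : Type u} [Fintype V]
    (G : DMG V) (r : SepRule) (X Y : V) (hXY : X ≠ Y)
    (hD1 : ¬ G.D X Y) (hD2 : ¬ G.D Y X)
    (I : Set V) (hI1 : G.paSet {X, Y} ⊆ I) (hI2 : X ∉ I) (hI3 : Y ∉ I) :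
    G.B X Y ↔ ¬ rSep (G.intervene I) r (G.paSet {X, Y}) X Y := by
  constructor
  · intro hB hsep
    set q : MPath V := ⟨1, fun i => if i = 0 then X else Y, fun _ => EKind.bi, le_refl 1⟩ with hq
    have hval : q.valid (G.intervene I) := by
      intro i hi
      have hi1 : i < 1 := hi
      have hi0 : i = 0 := by omega
      subst hi0
      refine ⟨?_, ?_, ?_⟩ <;> intro h
      · exact nomatch h
      · exact nomatch h
      · exact ⟨hB, hI2, hI3⟩
    obtain ⟨i, hi1, hi2, -⟩ := hsep q hval rfl rfl
    have hi2' : i < 1 := hi2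
    omega
  · intro hsep
    unfold rSep at hsep
    push_neg at hsep
    obtain ⟨p, hv, h0, hk, hnb⟩ := hsep
    by_contra hB
    have hpaX : ∀ a, G.D a X → a ∈ I := fun a ha => hI1 ⟨X, Set.mem_insert _ _, ha⟩
    have hpaY : ∀ a, G.D a Y → a ∈ I := fun a ha => hI1 ⟨Y, Set.mem_insert_of_mem _ rfl, ha⟩
    have chain : ∀ m j, p.k - j ≤ m → 1 ≤ j → j < p.k → p.Z j ∉ I → p.Z j ≠ X → p.Z j ≠ Y →
        MPath.headAtSnd (p.E (j-1)) → False := by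
      intro m
      induction m with
      | zero => intro j hm h1 h2 _ _ _ _; omega
      | succ m ih =>
        intro j hm h1 h2 hzI hzX hzY hhead
        cases hEj : p.E j with
        | fwd =>
          have hd := (hv j h2).1 hEj
          have hnX : p.Z (j+1) ≠ X := fun he => hzI (hpaX _ (he ▸ hd.1))
          have hnY : p.Z (j+1) ≠ Y := fun he => hzI (hpaY _ (he ▸ hd.1))
          have hne : j + 1 ≠ p.k := fun he => hnY (by rw [he]; exact hk)
          exact ih (j+1) (by omega) (by omega) (by omega) hd.2 hnX hnY
            (by show MPath.headAtSnd (p.E j); rw [hEj]; trivial)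
        | bwd =>
          exact hnb ⟨j, h1, h2, Or.inl ⟨⟨hhead, by rw [hEj]; trivial⟩,
            notin_ancSet hI1 hzI hzX hzY⟩⟩
        | bi =>
          exact hnb ⟨j, h1, h2, Or.inl ⟨⟨hhead, by rw [hEj]; trivial⟩,
            notin_ancSet hI1 hzI hzX hzY⟩⟩
    rcases eq_or_lt_of_le p.hk with hk1 | hk2
    · -- p.k = 1
      rw [← hk1] at hk
      cases hE0 : p.E 0 with
      | fwd =>
        have hd := (hv 0 (by omega)).1 hE0
        have := hd.1
        rw [h0] at this
        have h1 : p.Z 1 = Y := hk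
        rw [h1] at this
        exact hD1 this
      | bwd =>
        have hd := (hv 0 (by omega)).2.1 hE0
        have := hd.1
        have h1 : p.Z 1 = Y := hk
        rw [h0, h1] at this
        exact hD2 this
      | bi =>
        have hd := (hv 0 (by omega)).2.2 hE0
        have := hd.1
        have h1 : p.Z 1 = Y := hk
        rw [h0, h1] at this
        exact hB this
    · -- p.k ≥ 2
      cases hE0 : p.E 0 with
      | bwd =>
        have hd := (hv 0 (by omega)).2.1 hE0
        have hZ1S : p.Z 1 ∈ G.paSet {X, Y} :=
          ⟨X, Set.mem_insert _ _, by rw [← h0]; exact hd.1⟩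
        refine hnb ⟨1, le_refl 1, hk2, Or.inr ⟨?_, hZ1S, Or.inr (Or.inr ⟨hE0, ?_⟩)⟩⟩
        · intro hc
          have h1 : MPath.headAtSnd (p.E 0) := hc.1
          rw [hE0] at h1
          exact h1
        · intro hsc
          have hx : p.Z 0 = p.Z 1 := anc_into_I hsc.2 (hI1 hZ1S)
          exact hI2 (by rw [← h0, hx]; exact hI1 hZ1S)
      | fwd =>
        have hd := (hv 0 (by omega)).1 hE0
        have hdXZ : G.D X (p.Z 1) := by rw [← h0]; exact hd.1
        have hZ1X : p.Z 1 ≠ X := fun he => G.D_irrefl X (he ▸ hdXZ)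
        have hZ1Y : p.Z 1 ≠ Y := fun he => hD1 (he ▸ hdXZ)
        have hZ1I : p.Z 1 ∉ I := hd.2
        exact chain p.k 1 (by omega) (le_refl 1) hk2 hZ1I hZ1X hZ1Y
          (by show MPath.headAtSnd (p.E 0); rw [hE0]; trivial)
      | bi =>
        have hd := (hv 0 (by omega)).2.2 hE0
        have hBX : G.B X (p.Z 1) := by rw [← h0]; exact hd.1
        have hZ1I : p.Z 1 ∉ I := hd.2.2
        by_cases hY : p.Z 1 = Y
        · exact hB (by rw [← hY]; exact hBX)
        · have hZ1X : p.Z 1 ≠ X := fun he => G.B_irrefl X (he ▸ hBX)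
          exact chain p.k 1 (by omega) (le_refl 1) hk2 hZ1I hZ1X hY
            (by show MPath.headAtSnd (p.E 0); rw [hE0]; trivial)
end
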